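/- arXiv:1706.09738 — 6 statements merged into one kernel-verified Lean document; each statement's English description precedes it below -/
import Mathlib

section
/- Let p be a prime and let P(z) = z^{p+1} + a_1 z^p + a_2 z^{p-1} + ... + a_{p-1} z^2 be a polynomial with coefficients in a valuation ring O with maximal ideal I, and let c, r be elements of O. Suppose that every coefficient of the polynomial ((p+1)z^p + p a_1 z^{p-1} + (p-1) a_2 z^{p-2} + ... + 2 a_{p-1} z)(z - c) - (z^{p+1} + a_1 z^p + ... + a_{p-1} z^2) lies in I, and that p ∈ I. Then c ∈ O (is integral) and a_2, a_3, ..., a_{p-1} all lie in I. -/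
open Polynomial

private lemma vnat_nonneg {K : Type*} [Field K] (v : AddValuation K (WithTop ℝ)) :
    ∀ n : ℕ, 0 ≤ v (n : K) := by
  intro n
  induction n with
  | zero => simp [v.map_zero]
  | succ n ih =>
    push_cast
    calc (0 : WithTop ℝ) ≤ min (v (n : K)) (v (1 : K)) := by
          simp [v.map_one, ih]
      _ ≤ v ((n : K) + 1) := v.map_add _ _

private lemma vint_nonneg {K : Type*} [Field K] (v : AddValuation K (WithTop ℝ)) :
    ∀ n : ℤ, 0 ≤ v (n : K) := by
  intro n
  rcases n.natAbs_eq with h | h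
  · rw [h, Int.cast_natCast]; exact vnat_nonneg v _
  · rw [h, Int.cast_neg, Int.cast_natCast, v.map_neg]; exact vnat_nonneg v _

private lemma vcoprime {K : Type*} [Field K] (v : AddValuation K (WithTop ℝ))
    {p m : ℕ} (hp : p.Prime) (hpI : 0 < v ((p : K))) (hm : ¬ p ∣ m) :
    v ((m : K)) ≤ 0 := by
  have hcop : Nat.Coprime p m := (Nat.Prime.coprime_iff_not_dvd hp).mpr hm
  have hb := Nat.gcd_eq_gcd_ab p m
  rw [hcop] at hb
  -- (1 : ℤ) = p * gcdA + m * gcdB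
  have hK : (1 : K) = (p : K) * ((Nat.gcdA p m : ℤ) : K) + (m : K) * ((Nat.gcdB p m : ℤ) : K) := by
    have := congrArg (fun z : ℤ => ((z : K))) hb
    push_cast at this ⊢
    linear_combination this
  have h0 : min (v ((p : K) * ((Nat.gcdA p m : ℤ) : K))) (v ((m : K) * ((Nat.gcdB p m : ℤ) : K)))
      ≤ (0 : WithTop ℝ) := by
    calc _ ≤ v ((p : K) * ((Nat.gcdA p m : ℤ) : K) + (m : K) * ((Nat.gcdB p m : ℤ) : K)) :=
          v.map_add _ _
      _ = v (1 : K) := by rw [← hK]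
      _ = 0 := v.map_one
  have hpa : 0 < v ((p : K) * ((Nat.gcdA p m : ℤ) : K)) := by
    rw [v.map_mul]
    exact add_pos_of_pos_of_nonneg hpI (vint_nonneg v _)
  have hmb : v ((m : K) * ((Nat.gcdB p m : ℤ) : K)) ≤ 0 := by
    rcases min_le_iff.mp h0 with h | h
    · exact absurd (lt_of_lt_of_le hpa h) (by norm_num)
    · exact h
  rw [v.map_mul] at hmb
  calc v ((m : K)) = v ((m : K)) + 0 := by rw [add_zero]
    _ ≤ v ((m : K)) + v ((Nat.gcdB p m : ℤ) : K) := by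
        exact add_le_add_right (vint_nonneg v _) _
    _ ≤ 0 := hmb

/-- Let `p` be prime and
`P(z) = z^{p+1} + a₁ z^p + … + a_{p-1} z²` with coefficients in the valuation
ring `O = {x | 0 ≤ v x}` of a valued field `(K, v)`, and `c, r ∈ O`.  If every
coefficient of `P'(z)·(z - c) - P(z)` lies in the maximal ideal
`I = {x | 0 < v x}` and `p ∈ I`, then `c ∈ O` and `a₂, …, a_{p-1} ∈ I`. -/
theorem stmt0 {K : Type*} [Field K] (v : AddValuation K (WithTop ℝ))
    (p : ℕ) (hp : p.Prime)
    (a : ℕ → K) (c r : K)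
    (ha : ∀ j, 1 ≤ j → j ≤ p - 1 → 0 ≤ v (a j))
    (hc : 0 ≤ v c) (hr : 0 ≤ v r)
    (P : Polynomial K)
    (hP : P = X ^ (p + 1) + ∑ j ∈ Finset.Icc 1 (p - 1), C (a j) * X ^ (p + 1 - j))
    (hQ : ∀ i : ℕ, 0 < v ((derivative P * (X - C c) - P).coeff i))
    (hpI : 0 < v ((p : K))) :
    0 ≤ v c ∧ ∀ j, 2 ≤ j → j ≤ p - 1 → 0 < v (a j) := by
  refine ⟨hc, ?_⟩
  -- coefficients of P
  have key : ∀ k, 1 ≤ k → k ≤ p - 1 → P.coeff (p + 1 - k) = a k := by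
    intro k hk1 hk2
    rw [hP, coeff_add, coeff_X_pow, finset_sum_coeff]
    rw [if_neg (by omega), zero_add]
    rw [Finset.sum_eq_single k]
    · rw [coeff_C_mul, coeff_X_pow, if_pos rfl, mul_one]
    · intro j hj hjk
      rw [coeff_C_mul, coeff_X_pow, if_neg, mul_zero]
      rw [Finset.mem_Icc] at hj; omega
    · intro h; exact absurd (Finset.mem_Icc.mpr ⟨hk1, hk2⟩) h
  -- the coefficient relation
  have rel : ∀ k, 2 ≤ k → k ≤ p - 1 →
      0 < v (((p - k : ℕ) : K) * a k - ((p + 2 - k : ℕ) : K) * c * a (k - 1)) := by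
    intro k hk2 hkp
    have hi1 : p + 1 - k = (p - k) + 1 := by omega
    have hi2 : p + 2 - k = (p - k) + 2 := by omega
    have hQk := hQ ((p - k) + 1)
    have expand : (derivative P * (X - C c) - P).coeff ((p - k) + 1)
        = (derivative P).coeff (p - k) - (derivative P).coeff ((p - k) + 1) * c
          - P.coeff ((p - k) + 1) := by
      rw [mul_sub, coeff_sub, coeff_sub, coeff_mul_X, coeff_mul_C]
    rw [expand, coeff_derivative, coeff_derivative] at hQk
    have e1 : (p - k) + 1 = p + 1 - k := by omega
    rw [e1, key k (by omega) hkp] at hQk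
    have e2 : p + 1 - k + 1 = p + 1 - (k - 1) := by omega
    rw [e2, key (k - 1) (by omega) (by omega)] at hQk
    have c1 : ((p + 1 - k : ℕ) : K) = ((p - k : ℕ) : K) + 1 := by
      have : p + 1 - k = (p - k) + 1 := by omega
      rw [this]; push_cast; ring
    have c2 : ((p + 2 - k : ℕ) : K) = ((p - k : ℕ) : K) + 2 := by
      rw [hi2]; push_cast; ring
    rw [c1] at hQk
    have ecast : a k * (((p - k : ℕ) : K) + 1) - a (k - 1) * (((p - k : ℕ) : K) + 1 + 1) * c
          - a k = ((p - k : ℕ) : K) * a k - ((p + 2 - k : ℕ) : K) * c * a (k - 1) := by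
      rw [c2]; ring
    rwa [ecast] at hQk
  -- induction
  intro k
  induction k using Nat.strong_induction_on with
  | _ k ih =>
  intro hk2 hkp
  have hrel := rel k hk2 hkp
  have hT : 0 < v (((p + 2 - k : ℕ) : K) * c * a (k - 1)) := by
    rw [v.map_mul, v.map_mul]
    rcases eq_or_lt_of_le hk2 with h2 | h3
    · -- k = 2, p + 2 - k = p
      have hpk : p + 2 - k = p := by omega
      rw [hpk]
      have ha1 : 0 ≤ v (a 1) := ha 1 le_rfl (by omega)
      have h2' : (2 : ℕ) = k := h2
      rw [← h2']
      exact add_pos_of_pos_of_nonneg (add_pos_of_pos_of_nonneg hpI hc) ha1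
    · have hak : 0 < v (a (k - 1)) := ih (k - 1) (by omega) (by omega) (by omega)
      have h1 : (0 : WithTop ℝ) ≤ v (((p + 2 - k : ℕ) : K)) + v c :=
        add_nonneg (vnat_nonneg v _) hc
      exact lt_of_lt_of_le hak (le_add_of_nonneg_left h1)
  have hS : 0 < v (((p - k : ℕ) : K) * a k) := by
    have : ((p - k : ℕ) : K) * a k
        = (((p - k : ℕ) : K) * a k - ((p + 2 - k : ℕ) : K) * c * a (k - 1))
          + ((p + 2 - k : ℕ) : K) * c * a (k - 1) := by ring
    rw [this]
    exact v.map_lt_add hrel hT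
  rw [v.map_mul] at hS
  have hp3 : 3 ≤ p := by
    rcases hp.two_le.lt_or_eq with h | h
    · omega
    · exfalso; omega
  have hle : v (((p - k : ℕ) : K)) ≤ 0 := by
    apply vcoprime v hp hpI
    intro hdvd
    have := Nat.le_of_dvd (by omega) hdvd
    omega
  calc (0 : WithTop ℝ) < v (((p - k : ℕ) : K)) + v (a k) := hS
    _ ≤ 0 + v (a k) := add_le_add_left hle _
    _ = v (a k) := by rw [zero_add]
end

section
/- For the passport a_1^2 a_4 b_1^2 b_2^2 there are exactly two plane bipartite trees, one with automorphism group of order 2 and one with trivial automorphism group, and 1 + 1/2 = 2!·3!/(2!·2!·2!). -/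
open Equiv Finset

attribute [local instance] Classical.propDecidable

noncomputable section

/-- Number of cycles (orbits, including fixed points) of a permutation of
`Fin E`. -/
def numCycles {E : ℕ} (g : Equiv.Perm (Fin E)) : ℕ :=
  E - g.cycleType.sum + Multiset.card g.cycleType

/-- Number of cycles of length `d` of a permutation of `Fin E` (for `d = 1`,
the number of fixed points). -/
def cycleCount {E : ℕ} (g : Equiv.Perm (Fin E)) (d : ℕ) : ℕ :=
  if d = 1 then E - g.cycleType.sum else Multiset.count d g.cycleType

/-- A plane bipartite tree with `E` edges, encoded by the pair of rotation
permutations of the edges around white (`s.1`) and black (`s.2`) vertices: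
the action is transitive (connectivity), the number of vertices is `E + 1`
and there is exactly one face. -/
def IsPlaneBipTree {E : ℕ} (s : Equiv.Perm (Fin E) × Equiv.Perm (Fin E)) : Prop :=
  (∀ i j : Fin E, ∃ g ∈ Subgroup.closure ({s.1, s.2} : Set (Equiv.Perm (Fin E))), g i = j) ∧
  numCycles s.1 + numCycles s.2 = E + 1 ∧
  numCycles (s.1 * s.2) = 1

/-- A `2¹`-map with `E` edges: a connected bipartite plane map with two faces,
the bounded one of perimeter 2 (a fixed point of the face permutation
`s.1 * s.2`); Euler's formula forces `V = E`. -/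
def IsTwoOneMap {E : ℕ} (s : Equiv.Perm (Fin E) × Equiv.Perm (Fin E)) : Prop :=
  (∀ i j : Fin E, ∃ g ∈ Subgroup.closure ({s.1, s.2} : Set (Equiv.Perm (Fin E))), g i = j) ∧
  numCycles s.1 + numCycles s.2 = E ∧
  numCycles (s.1 * s.2) = 2 ∧
  (∃ i, (s.1 * s.2) i = i)

/-- Isomorphism of bipartite maps on the same edge set: simultaneous
conjugation of both rotations. -/
def conjRel {E : ℕ} (s t : Equiv.Perm (Fin E) × Equiv.Perm (Fin E)) : Prop :=
  ∃ g : Equiv.Perm (Fin E), g * s.1 * g⁻¹ = t.1 ∧ g * s.2 * g⁻¹ = t.2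

theorem conjRel_equiv {E : ℕ} : Equivalence (conjRel (E := E)) := by
  constructor
  · exact fun s => ⟨1, by simp, by simp⟩
  · rintro s t ⟨g, h1, h2⟩
    exact ⟨g⁻¹, by rw [← h1]; group, by rw [← h2]; group⟩
  · rintro s t u ⟨g, h1, h2⟩ ⟨g', h1', h2'⟩
    exact ⟨g' * g, by rw [← h1', ← h1]; group, by rw [← h2', ← h2]; group⟩

/-- The number of automorphisms of a bipartite map: permutations of the edges
commuting with both rotations. -/
def autCard {E : ℕ} (s : Equiv.Perm (Fin E) × Equiv.Perm (Fin E)) : ℕ :=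
  Fintype.card {g : Equiv.Perm (Fin E) // g * s.1 = s.1 * g ∧ g * s.2 = s.2 * g}

theorem conj_commute_aux {G : Type*} [Group G] (g σ h' : G)
    (hc : h' * σ = σ * h') :
    (g * h' * g⁻¹) * (g * σ * g⁻¹) = (g * σ * g⁻¹) * (g * h' * g⁻¹) := by
  calc (g * h' * g⁻¹) * (g * σ * g⁻¹) = g * (h' * σ) * g⁻¹ := by group
    _ = g * (σ * h') * g⁻¹ := by rw [hc]
    _ = (g * σ * g⁻¹) * (g * h' * g⁻¹) := by group

theorem autCard_conj {E : ℕ} (s t : Equiv.Perm (Fin E) × Equiv.Perm (Fin E))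
    (h : conjRel s t) : autCard s = autCard t := by
  obtain ⟨g, h1, h2⟩ := h
  have hs1 : s.1 = g⁻¹ * t.1 * g⁻¹⁻¹ := by rw [← h1]; group
  have hs2 : s.2 = g⁻¹ * t.2 * g⁻¹⁻¹ := by rw [← h2]; group
  refine Fintype.card_congr ⟨fun h' => ⟨g * h'.1 * g⁻¹, ?_, ?_⟩,
    fun h' => ⟨g⁻¹ * h'.1 * g, ?_, ?_⟩,
    fun h' => Subtype.ext (by dsimp; group),
    fun h' => Subtype.ext (by dsimp; group)⟩
  · rw [← h1]; exact conj_commute_aux g s.1 h'.1 h'.2.1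
  · rw [← h2]; exact conj_commute_aux g s.2 h'.1 h'.2.2
  · rw [hs1]
    have := conj_commute_aux g⁻¹ t.1 h'.1 h'.2.1
    simpa [inv_inv] using this
  · rw [hs2]
    have := conj_commute_aux g⁻¹ t.2 h'.1 h'.2.2
    simpa [inv_inv] using this

/-- The setoid of plane bipartite trees up to isomorphism. -/
def treeSetoid (E : ℕ) : Setoid {s : Equiv.Perm (Fin E) × Equiv.Perm (Fin E) // IsPlaneBipTree s} :=
  ⟨fun T T' => conjRel T.1 T'.1,
   ⟨fun _ => conjRel_equiv.refl _,
    fun h => conjRel_equiv.symm h,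
    fun h h' => conjRel_equiv.trans h h'⟩⟩

/-- The setoid of `2¹`-maps up to isomorphism. -/
def mapSetoid (E : ℕ) : Setoid {s : Equiv.Perm (Fin E) × Equiv.Perm (Fin E) // IsTwoOneMap s} :=
  ⟨fun T T' => conjRel T.1 T'.1,
   ⟨fun _ => conjRel_equiv.refl _,
    fun h => conjRel_equiv.symm h,
    fun h h' => conjRel_equiv.trans h h'⟩⟩

/-- The order of the automorphism group of an isomorphism class of plane
bipartite trees. -/
def autCardT {E : ℕ} : Quotient (treeSetoid E) → ℕ :=
  Quotient.lift (fun T => autCard T.1) (fun _ _ h => autCard_conj _ _ h)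

theorem cycleCount_conj {E : ℕ} {s t : Equiv.Perm (Fin E) × Equiv.Perm (Fin E)}
    (h : conjRel s t) :
    (∀ d, cycleCount s.1 d = cycleCount t.1 d) ∧
    (∀ d, cycleCount s.2 d = cycleCount t.2 d) := by
  obtain ⟨g, h1, h2⟩ := h
  constructor <;> intro d <;>
    simp [cycleCount, ← h1, ← h2, Equiv.Perm.cycleType_conj]

/-- The passport of an isomorphism class of plane bipartite trees:
`kk d` white and `ll d` black vertices of degree `d`, for every `d ≥ 1`. -/
def HasPassportT {E : ℕ} (kk ll : ℕ → ℕ) : Quotient (treeSetoid E) → Prop :=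
  Quotient.lift
    (fun T => ∀ d, 1 ≤ d → cycleCount T.1.1 d = kk d ∧ cycleCount T.1.2 d = ll d)
    (by
      intro T T' h
      have hc := cycleCount_conj (s := T.1) (t := T'.1) h
      apply propext
      constructor <;> intro H d hd
      · rw [← hc.1 d, ← hc.2 d]; exact H d hd
      · rw [hc.1 d, hc.2 d]; exact H d hd)

/-- The passport of an isomorphism class of `2¹`-maps. -/
def HasPassportM {E : ℕ} (kk ll : ℕ → ℕ) : Quotient (mapSetoid E) → Prop :=
  Quotient.lift
    (fun T => ∀ d, 1 ≤ d → cycleCount T.1.1 d = kk d ∧ cycleCount T.1.2 d = ll d)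
    (by
      intro T T' h
      have hc := cycleCount_conj (s := T.1) (t := T'.1) h
      apply propext
      constructor <;> intro H d hd
      · rw [← hc.1 d, ← hc.2 d]; exact H d hd
      · rw [hc.1 d, hc.2 d]; exact H d hd)


namespace Stmt3Aux

def sig : Perm (Fin 6) := c[0,1,2,3]
def al1 : Perm (Fin 6) := Equiv.swap 4 0 * Equiv.swap 5 2
def al2 : Perm (Fin 6) := Equiv.swap 4 0 * Equiv.swap 5 1
def tau : Perm (Fin 6) := Equiv.swap 4 5
def L : List (Perm (Fin 6)) := [1, sig, sig^2, sig^3, tau, sig*tau, sig^2*tau, sig^3*tau]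

theorem cycleType_sig : sig.cycleType = {4} := by
  have h1 : Equiv.Perm.IsCycle sig := Cycle.isCycle_formPerm _ _ ((Cycle.nontrivial_coe_nodup_iff (by decide)).mpr (by decide))
  have h2 : sig.support = ({0,1,2,3} : Finset (Fin 6)) := by
    rw [show sig = c[0,1,2,3] from rfl, Cycle.support_formPerm _ _ ((Cycle.nontrivial_coe_nodup_iff (by decide)).mpr (by decide))]
    decide
  rw [h1.cycleType, h2]
  decide

theorem cycleType_al1 : al1.cycleType = {2,2} := by
  have hd : (Equiv.swap (4:Fin 6) 0).Disjoint (Equiv.swap 5 2) := by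
    have h : ∀ x : Fin 6, Equiv.swap (4:Fin 6) 0 x = x ∨ Equiv.swap (5:Fin 6) 2 x = x := by decide
    exact h
  rw [al1, hd.cycleType_mul, (Equiv.Perm.isCycle_swap (by decide)).cycleType,
    (Equiv.Perm.isCycle_swap (by decide)).cycleType,
    Equiv.Perm.support_swap (by decide), Equiv.Perm.support_swap (by decide)]
  decide

theorem cycleType_al2 : al2.cycleType = {2,2} := by
  have hd : (Equiv.swap (4:Fin 6) 0).Disjoint (Equiv.swap 5 1) := by
    have h : ∀ x : Fin 6, Equiv.swap (4:Fin 6) 0 x = x ∨ Equiv.swap (5:Fin 6) 1 x = x := by decide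
    exact h
  rw [al2, hd.cycleType_mul, (Equiv.Perm.isCycle_swap (by decide)).cycleType,
    (Equiv.Perm.isCycle_swap (by decide)).cycleType,
    Equiv.Perm.support_swap (by decide), Equiv.Perm.support_swap (by decide)]
  decide

theorem cycleType_sixcycle {f : Perm (Fin 6)} (l : List (Fin 6)) (hn : l.length = 6)
    (hnd : l.Nodup) (hf : f = l.formPerm) (hs : l.toFinset = Finset.univ) :
    f.cycleType = {6} := by
  have h1 : Equiv.Perm.IsCycle f := by
    rw [hf]; exact List.isCycle_formPerm hnd (by omega)
  have h2 : f.support = Finset.univ := by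
    rw [hf, List.support_formPerm_of_nodup l hnd, hs]
    intro x hx; rw [hx] at hn; simp at hn
  rw [h1.cycleType, h2]
  rw [Finset.card_univ]
  rfl

theorem cycleType_f1 : (sig * al1).cycleType = {6} :=
  cycleType_sixcycle [0,4,1,2,5,3] rfl (by decide) (by decide) (by decide)

theorem cycleType_f2 : (sig * al2).cycleType = {6} :=
  cycleType_sixcycle [0,4,1,5,2,3] rfl (by decide) (by decide) (by decide)


theorem fixfree {f : Perm (Fin 6)} (h : f.cycleType.sum = 6) : ∀ x, f x ≠ x := by
  have hs := f.sum_cycleType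
  have hcard : f.support.card = 6 := by omega
  have huniv : f.support = Finset.univ := by
    apply Finset.eq_univ_of_card
    rw [hcard]; rfl
  intro x
  exact Equiv.Perm.mem_support.mp (huniv ▸ Finset.mem_univ x)

theorem six_isCycle {f : Perm (Fin 6)} (h : f.cycleType = {6}) : f.IsCycle := by
  apply Equiv.Perm.card_cycleType_eq_one.mp
  rw [h]; rfl

theorem six_fixfree {f : Perm (Fin 6)} (h : f.cycleType = {6}) : ∀ x, f x ≠ x :=
  fixfree (by rw [h]; rfl)

theorem six_sq_fixfree {f : Perm (Fin 6)} (h : f.cycleType = {6}) : ∀ i, f (f i) ≠ i := by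
  intro i hi
  have hc := six_isCycle h
  have hfix := six_fixfree h
  have h2 : (f ^ 2) i = i := by
    rw [pow_two, Equiv.Perm.mul_apply, hi]
  have hone : f ^ 2 = 1 := (hc.pow_eq_one_iff' (hfix i)).mpr h2
  have ho : orderOf f = 6 := by
    rw [hc.orderOf, ← f.sum_cycleType, h]; rfl
  have hd : orderOf f ∣ 2 := orderOf_dvd_of_pow_eq_one hone
  rw [ho] at hd
  omega

theorem six_orderOf {f : Perm (Fin 6)} (h : f.cycleType = {6}) : orderOf f = 6 := by
  rw [(six_isCycle h).orderOf, ← f.sum_cycleType, h]; rfl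

theorem isTree_of_types {σ α : Perm (Fin 6)} (h1 : σ.cycleType = {4})
    (h2 : α.cycleType = {2,2}) (h3 : (σ*α).cycleType = {6}) :
    IsPlaneBipTree (σ, α) := by
  refine ⟨?_, ?_, ?_⟩
  · intro i j
    have hc := six_isCycle h3
    have hfix := six_fixfree h3
    obtain ⟨n, hn⟩ := hc.exists_zpow_eq (hfix i) (hfix j)
    refine ⟨(σ*α) ^ n, ?_, hn⟩
    have hσ : σ ∈ Subgroup.closure ({σ, α} : Set (Perm (Fin 6))) :=
      Subgroup.subset_closure (Set.mem_insert _ _)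
    have hα : α ∈ Subgroup.closure ({σ, α} : Set (Perm (Fin 6))) :=
      Subgroup.subset_closure (Set.mem_insert_of_mem _ rfl)
    exact Subgroup.zpow_mem _ (Subgroup.mul_mem _ hσ hα) n
  · show numCycles σ + numCycles α = 7
    rw [numCycles, numCycles, h1, h2]; rfl
  · show numCycles (σ * α) = 1
    rw [numCycles, h3]; rfl

theorem passport_of_types {σ α : Perm (Fin 6)} (h1 : σ.cycleType = {4})
    (h2 : α.cycleType = {2,2}) :
    ∀ d, 1 ≤ d → cycleCount σ d = (if d = 1 then 2 else if d = 4 then 1 else 0)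
      ∧ cycleCount α d = (if d = 1 then 2 else if d = 2 then 2 else 0) := by
  intro d _
  rcases eq_or_ne d 1 with rfl | hd1
  · constructor
    · rw [cycleCount, if_pos rfl, if_pos rfl, h1]; rfl
    · rw [cycleCount, if_pos rfl, if_pos rfl, h2]; rfl
  · constructor
    · rw [cycleCount, if_neg hd1, if_neg hd1, h1]
      rcases eq_or_ne d 4 with rfl | hd4
      · rw [if_pos rfl]; rfl
      · rw [if_neg hd4, Multiset.count_singleton, if_neg hd4]
    · rw [cycleCount, if_neg hd1, if_neg hd1, h2]
      rcases eq_or_ne d 2 with rfl | hd2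
      · rw [if_pos rfl]; rfl
      · rw [if_neg hd2]
        rw [show ({2,2} : Multiset ℕ) = 2 ::ₘ {2} from rfl, Multiset.count_cons_of_ne hd2,
          Multiset.count_singleton, if_neg hd2]

theorem support_card_le {f : Perm (Fin 6)} : f.cycleType.sum ≤ 6 := by
  rw [f.sum_cycleType]
  exact le_trans (Finset.card_le_univ _) (by simp)

theorem types_of_passport {σ α : Perm (Fin 6)} (hT : IsPlaneBipTree (σ, α))
    (hp : ∀ d, 1 ≤ d → cycleCount σ d = (if d = 1 then 2 else if d = 4 then 1 else 0)
      ∧ cycleCount α d = (if d = 1 then 2 else if d = 2 then 2 else 0)) :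
    σ.cycleType = {4} ∧ α.cycleType = {2,2} ∧ (σ*α).cycleType = {6} := by
  have hσsum : σ.cycleType.sum = 4 := by
    have h1 := (hp 1 le_rfl).1
    rw [cycleCount, if_pos rfl, if_pos rfl] at h1
    have := support_card_le (f := σ)
    omega
  have hσ : σ.cycleType = {4} := by
    have hall : ∀ b ∈ σ.cycleType, b = 4 := by
      intro b hb
      have h2 : 2 ≤ b := Equiv.Perm.two_le_of_mem_cycleType hb
      have h4 : b ≤ 4 := hσsum ▸ Multiset.le_sum_of_mem hb
      have hc2 : Multiset.count 2 σ.cycleType = 0 := by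
        have := (hp 2 (by norm_num)).1
        rwa [cycleCount, if_neg (by norm_num), if_neg (by norm_num), if_neg (by norm_num)] at this
      have hc3 : Multiset.count 3 σ.cycleType = 0 := by
        have := (hp 3 (by norm_num)).1
        rwa [cycleCount, if_neg (by norm_num), if_neg (by norm_num), if_neg (by norm_num)] at this
      have hb2 : b ≠ 2 := fun h => by
        rw [h] at hb; rw [Multiset.count_eq_zero] at hc2; exact hc2 hb
      have hb3 : b ≠ 3 := fun h => by
        rw [h] at hb; rw [Multiset.count_eq_zero] at hc3; exact hc3 hb
      omega
    have hrep := Multiset.eq_replicate_card.mpr hall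
    have hcard : Multiset.card σ.cycleType = 1 := by
      have h := hσsum
      rw [hrep, Multiset.sum_replicate, smul_eq_mul] at h
      omega
    rw [hrep, hcard]; rfl
  have hαsum : α.cycleType.sum = 4 := by
    have h1 := (hp 1 le_rfl).2
    rw [cycleCount, if_pos rfl, if_pos rfl] at h1
    have := support_card_le (f := α)
    omega
  have hα : α.cycleType = {2,2} := by
    have hall : ∀ b ∈ α.cycleType, b = 2 := by
      intro b hb
      have h2 : 2 ≤ b := Equiv.Perm.two_le_of_mem_cycleType hb
      have h4 : b ≤ 4 := hαsum ▸ Multiset.le_sum_of_mem hb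
      have hc3 : Multiset.count 3 α.cycleType = 0 := by
        have := (hp 3 (by norm_num)).2
        rwa [cycleCount, if_neg (by norm_num), if_neg (by norm_num), if_neg (by norm_num)] at this
      have hc4 : Multiset.count 4 α.cycleType = 0 := by
        have := (hp 4 (by norm_num)).2
        rwa [cycleCount, if_neg (by norm_num), if_neg (by norm_num), if_neg (by norm_num)] at this
      have hb3 : b ≠ 3 := fun h => by
        rw [h] at hb; rw [Multiset.count_eq_zero] at hc3; exact hc3 hb
      have hb4 : b ≠ 4 := fun h => by
        rw [h] at hb; rw [Multiset.count_eq_zero] at hc4; exact hc4 hb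
      omega
    have hrep := Multiset.eq_replicate_card.mpr hall
    have hcard : Multiset.card α.cycleType = 2 := by
      have h := hαsum
      rw [hrep, Multiset.sum_replicate, smul_eq_mul] at h
      omega
    rw [hrep, hcard]; rfl
  refine ⟨hσ, hα, ?_⟩
  have hnum : numCycles (σ * α) = 1 := hT.2.2
  rw [numCycles] at hnum
  have hsum := support_card_le (f := σ * α)
  have hle : 2 * Multiset.card (σ*α).cycleType ≤ (σ*α).cycleType.sum := by
    have h := Multiset.card_nsmul_le_sum (s := (σ*α).cycleType) (a := 2)
      (fun x hx => Equiv.Perm.two_le_of_mem_cycleType hx)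
    simpa [smul_eq_mul, mul_comm] using h
  have hle2 : (σ*α).cycleType.sum ≤ Multiset.card (σ*α).cycleType * 6 := by
    apply Multiset.sum_le_card_nsmul
    intro x hx
    exact le_trans (Equiv.Perm.le_card_support_of_mem_cycleType hx)
      (le_trans (Finset.card_le_univ _) (by simp))
  have hs6 : (σ*α).cycleType.sum = 6 ∧ Multiset.card (σ*α).cycleType = 1 := by
    constructor <;> omega
  obtain ⟨a, ha⟩ := Multiset.card_eq_one.mp hs6.2
  have ha6 : a = 6 := by
    have h := hs6.1
    rw [ha] at h
    simpa using h
  rw [ha, ha6]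

set_option maxRecDepth 100000 in
theorem keyDecide : ∀ q r s : Fin 6, q ≠ 4 → r ≠ 4 → s ≠ 4 → q ≠ r → q ≠ s → r ≠ s →
    (q = 5 ∨ r = 5 ∨ s = 5) →
    (∀ i, (sig * (Equiv.swap 4 q * Equiv.swap r s))
      ((sig * (Equiv.swap 4 q * Equiv.swap r s)) i) ≠ i) →
    ∃ g ∈ L, g * sig * g⁻¹ = sig ∧
      (g * (Equiv.swap 4 q * Equiv.swap r s) * g⁻¹ = al1 ∨
       g * (Equiv.swap 4 q * Equiv.swap r s) * g⁻¹ = al2) := by decide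

theorem eq_swap_mul_swap {β : Equiv.Perm (Fin 6)} {p q r s : Fin 6}
    (hinv : ∀ x, β (β x) = x) (hpq : β p = q) (hrs : β r = s)
    (h1 : p ≠ q) (h2 : p ≠ r) (h3 : p ≠ s) (h4 : q ≠ r) (h5 : q ≠ s) (h6 : r ≠ s)
    (hout : ∀ x, x ≠ p → x ≠ q → x ≠ r → x ≠ s → β x = x) :
    β = Equiv.swap p q * Equiv.swap r s := by
  have hqp : β q = p := by rw [← hpq, hinv]
  have hsr : β s = r := by rw [← hrs, hinv]
  ext x
  rw [Equiv.Perm.mul_apply]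
  rcases eq_or_ne x p with rfl | hxp
  · rw [Equiv.swap_apply_of_ne_of_ne h2 h3, Equiv.swap_apply_left, hpq]
  rcases eq_or_ne x q with rfl | hxq
  · rw [Equiv.swap_apply_of_ne_of_ne h4 h5, Equiv.swap_apply_right, hqp]
  rcases eq_or_ne x r with rfl | hxr
  · rw [Equiv.swap_apply_left, Equiv.swap_apply_of_ne_of_ne (Ne.symm h3) (Ne.symm h5), hrs]
  rcases eq_or_ne x s with rfl | hxs
  · rw [Equiv.swap_apply_right, Equiv.swap_apply_of_ne_of_ne (Ne.symm h2) (Ne.symm h4), hsr]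
  rw [Equiv.swap_apply_of_ne_of_ne hxr hxs, Equiv.swap_apply_of_ne_of_ne hxp hxq,
    hout x hxp hxq hxr hxs]

theorem beta_form {β : Equiv.Perm (Fin 6)} (h2 : β.cycleType = {2,2})
    (h3 : (sig*β).cycleType = {6}) :
    ∃ q r s : Fin 6, q ≠ 4 ∧ r ≠ 4 ∧ s ≠ 4 ∧ q ≠ r ∧ q ≠ s ∧ r ≠ s ∧
      (q = 5 ∨ r = 5 ∨ s = 5) ∧ β = Equiv.swap 4 q * Equiv.swap r s := by
  have hfix := six_fixfree h3
  have hinv : ∀ x, β (β x) = x := by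
    have hlcm : β.cycleType.lcm = 2 := by rw [h2]; rfl
    have ho : orderOf β = 2 := by rw [← β.lcm_cycleType, hlcm]
    have hβ2 : β ^ 2 = 1 := by rw [← ho]; exact pow_orderOf_eq_one β
    intro x
    have := DFunLike.congr_fun hβ2 x
    rwa [pow_two, Equiv.Perm.mul_apply, Equiv.Perm.one_apply] at this
  have hsig4 : sig 4 = 4 := by decide
  have hsig5 : sig 5 = 5 := by decide
  have hβ4 : β 4 ≠ 4 := fun h => hfix 4 (by rw [Equiv.Perm.mul_apply, h, hsig4])
  have hβ5 : β 5 ≠ 5 := fun h => hfix 5 (by rw [Equiv.Perm.mul_apply, h, hsig5])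
  have hsupcard : β.support.card = 4 := by
    rw [← β.sum_cycleType, h2]; rfl
  have h4mem : (4 : Fin 6) ∈ β.support := Equiv.Perm.mem_support.mpr hβ4
  have h5mem : (5 : Fin 6) ∈ β.support := Equiv.Perm.mem_support.mpr hβ5
  rcases eq_or_ne (β 4) 5 with hq5 | hq5
  · -- β 4 = 5
    have hβ54 : β 5 = 4 := by rw [← hq5, hinv]
    -- pick r in support \ {4,5}
    have hcard2 : (β.support \ {4,5}).card = 2 := by
      rw [Finset.card_sdiff_of_subset (by
        intro x hx
        simp only [Finset.mem_insert, Finset.mem_singleton] at hx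
        rcases hx with rfl | rfl
        exacts [h4mem, h5mem])]
      rw [hsupcard]
      rfl
    have : 0 < (β.support \ {4,5}).card := by omega
    obtain ⟨r, hr⟩ := Finset.card_pos.mp this
    have hrsup : r ∈ β.support := (Finset.mem_sdiff.mp hr).1
    have hrne : r ≠ 4 ∧ r ≠ 5 := by
      have := (Finset.mem_sdiff.mp hr).2
      simp only [Finset.mem_insert, Finset.mem_singleton, not_or] at this
      exact this
    set s := β r with hs
    have hβr : β r ≠ r := Equiv.Perm.mem_support.mp hrsup
    have hsr : s ≠ r := fun h => hβr (by rw [← hs, h])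
    have hs4 : s ≠ 4 := fun h => hrne.2 (by
      have : β s = β 4 := by rw [h]
      rw [hs, hinv, hq5] at this; exact this)
    have hs5 : s ≠ 5 := fun h => hrne.1 (by
      have : β s = β 5 := by rw [h]
      rw [hs, hinv, hβ54] at this; exact this)
    refine ⟨5, r, s, by decide, hrne.1, hs4, Ne.symm hrne.2, Ne.symm hs5, Ne.symm hsr,
      Or.inl rfl, ?_⟩
    apply eq_swap_mul_swap hinv hq5 hs.symm (by decide) (Ne.symm hrne.1) (Ne.symm hs4)
      (Ne.symm hrne.2) (Ne.symm hs5) (Ne.symm hsr)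
    -- outside points are fixed
    intro x hx4 hx5 hxr hxs
    by_contra hbx
    have hxsup : x ∈ β.support := Equiv.Perm.mem_support.mpr hbx
    have hsub : ({4,5,r,s} : Finset (Fin 6)) ⊆ β.support := by
      intro y hy
      simp only [Finset.mem_insert, Finset.mem_singleton] at hy
      rcases hy with rfl | rfl | rfl | rfl
      · exact h4mem
      · exact h5mem
      · exact hrsup
      · exact Equiv.Perm.mem_support.mpr (by rw [hs, hinv]; exact Ne.symm hsr)
    have hcard4 : ({4,5,r,s} : Finset (Fin 6)).card = 4 := by
      rw [Finset.card_insert_of_notMem (by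
          simp only [Finset.mem_insert, Finset.mem_singleton, not_or]
          exact ⟨by decide, Ne.symm hrne.1, Ne.symm hs4⟩),
        Finset.card_insert_of_notMem (by
          simp only [Finset.mem_insert, Finset.mem_singleton, not_or]
          exact ⟨Ne.symm hrne.2, Ne.symm hs5⟩),
        Finset.card_insert_of_notMem (by simp only [Finset.mem_singleton]; exact Ne.symm hsr),
        Finset.card_singleton]
    have heq : ({4,5,r,s} : Finset (Fin 6)) = β.support :=
      Finset.eq_of_subset_of_card_le hsub (by omega)
    rw [← heq] at hxsup
    simp only [Finset.mem_insert, Finset.mem_singleton] at hxsup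
    rcases hxsup with h | h | h | h
    exacts [hx4 h, hx5 h, hxr h, hxs h]
  · -- β 4 ≠ 5
    set q := β 4 with hq
    set s := β 5 with hsdef
    have hq4 : q ≠ 4 := hβ4
    have hs5 : s ≠ 5 := hβ5
    have hs4 : s ≠ 4 := fun h => hq5 (by
      have : β s = β 4 := by rw [h]
      rw [hsdef, hinv] at this; rw [hq, ← this])
    have hqs : q ≠ s := fun h => (by
      have : β q = β s := by rw [h]
      rw [hq, hsdef, hinv, hinv] at this
      exact absurd this (by decide))
    have h5q : (5:Fin 6) ≠ q := Ne.symm hq5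
    refine ⟨q, 5, s, hq4, by decide, hs4, h5q.symm, hqs, hs5.symm, Or.inr (Or.inl rfl), ?_⟩
    apply eq_swap_mul_swap hinv hq.symm hsdef.symm hq4.symm (by decide) hs4.symm h5q.symm hqs hs5.symm
    intro x hx4 hxq hx5 hxs
    by_contra hbx
    have hxsup : x ∈ β.support := Equiv.Perm.mem_support.mpr hbx
    have hqsup : q ∈ β.support := Equiv.Perm.mem_support.mpr (by rw [hq, hinv]; exact Ne.symm hq4)
    have hssup : s ∈ β.support := Equiv.Perm.mem_support.mpr (by rw [hsdef, hinv]; exact Ne.symm hs5)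
    have hsub : ({4,q,5,s} : Finset (Fin 6)) ⊆ β.support := by
      intro y hy
      simp only [Finset.mem_insert, Finset.mem_singleton] at hy
      rcases hy with rfl | rfl | rfl | rfl
      exacts [h4mem, hqsup, h5mem, hssup]
    have hcard4 : ({4,q,5,s} : Finset (Fin 6)).card = 4 := by
      rw [Finset.card_insert_of_notMem (by
          simp only [Finset.mem_insert, Finset.mem_singleton, not_or]
          exact ⟨Ne.symm hq4, by decide, Ne.symm hs4⟩),
        Finset.card_insert_of_notMem (by
          simp only [Finset.mem_insert, Finset.mem_singleton, not_or]
          exact ⟨hq5, hqs⟩),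
        Finset.card_insert_of_notMem (by simp only [Finset.mem_singleton]; exact hs5.symm),
        Finset.card_singleton]
    have heq : ({4,q,5,s} : Finset (Fin 6)) = β.support :=
      Finset.eq_of_subset_of_card_le hsub (by omega)
    rw [← heq] at hxsup
    simp only [Finset.mem_insert, Finset.mem_singleton] at hxsup
    rcases hxsup with h | h | h | h
    exacts [hx4 h, hxq h, hx5 h, hxs h]

theorem classify {σ α : Perm (Fin 6)} (h1 : σ.cycleType = {4})
    (h2 : α.cycleType = {2,2}) (h3 : (σ*α).cycleType = {6}) :
    conjRel (σ, α) (sig, al1) ∨ conjRel (σ, α) (sig, al2) := by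
  have hconj : IsConj σ sig := Equiv.Perm.isConj_of_cycleType_eq (by rw [h1, cycleType_sig])
  obtain ⟨g, hg⟩ := isConj_iff.mp hconj
  set β := g * α * g⁻¹ with hβ
  have hβt : β.cycleType = {2,2} := by rw [hβ, Equiv.Perm.cycleType_conj, h2]
  have hmul : sig * β = g * (σ * α) * g⁻¹ := by rw [← hg, hβ]; group
  have hsigβ : (sig * β).cycleType = {6} := by rw [hmul, Equiv.Perm.cycleType_conj, h3]
  obtain ⟨q, r, s, hq4, hr4, hs4, hqr, hqs, hrs, h5mem, hform⟩ := beta_form hβt hsigβ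
  have hsq := six_sq_fixfree hsigβ
  rw [hform] at hsq
  obtain ⟨g', hgL, hgsig, hgal⟩ := keyDecide q r s hq4 hr4 hs4 hqr hqs hrs h5mem hsq
  rw [← hform] at hgal
  rcases hgal with h | h
  · left
    exact ⟨g' * g, by show g' * g * σ * (g' * g)⁻¹ = sig; rw [show g' * g * σ * (g' * g)⁻¹ = g' * (g * σ * g⁻¹) * g'⁻¹ by group, hg, hgsig],
      by show g' * g * α * (g' * g)⁻¹ = al1; rw [show g' * g * α * (g' * g)⁻¹ = g' * (g * α * g⁻¹) * g'⁻¹ by group, ← hβ, h]⟩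
  · right
    exact ⟨g' * g, by show g' * g * σ * (g' * g)⁻¹ = sig; rw [show g' * g * σ * (g' * g)⁻¹ = g' * (g * σ * g⁻¹) * g'⁻¹ by group, hg, hgsig],
      by show g' * g * α * (g' * g)⁻¹ = al2; rw [show g' * g * α * (g' * g)⁻¹ = g' * (g * α * g⁻¹) * g'⁻¹ by group, ← hβ, h]⟩

theorem central_pow {f g : Perm (Fin 6)} (h3 : f.cycleType = {6}) (hcom : g * f = f * g) :
    ∃ k : ℕ, k < 6 ∧ g = f ^ k := by
  have hc := six_isCycle h3
  have hfix := six_fixfree h3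
  have ho := six_orderOf h3
  have hC : Commute g f := hcom
  obtain ⟨n, hn⟩ := hc.sameCycle (hfix 0) (hfix (g 0))
  have hg : g = f ^ n := by
    apply Equiv.ext
    intro x
    obtain ⟨m, hm⟩ := hc.sameCycle (hfix 0) (hfix x)
    calc g x = g ((f ^ m) 0) := by rw [hm]
    _ = (g * f ^ m) 0 := rfl
    _ = (f ^ m * g) 0 := by rw [(hC.zpow_right m).eq]
    _ = (f ^ m) (g 0) := rfl
    _ = (f ^ m) ((f ^ n) 0) := by rw [hn]
    _ = (f ^ m * f ^ n) 0 := rfl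
    _ = (f ^ (m + n)) 0 := by rw [← zpow_add]
    _ = (f ^ (n + m)) 0 := by rw [Int.add_comm]
    _ = (f ^ n * f ^ m) 0 := by rw [zpow_add]
    _ = (f ^ n) ((f ^ m) 0) := rfl
    _ = (f ^ n) x := by rw [hm]
  have hmod : f ^ (n % (6:ℤ)) = f ^ n := by
    have := zpow_mod_orderOf f n
    rwa [ho] at this
  have hnn : 0 ≤ n % 6 := Int.emod_nonneg n (by norm_num)
  have hlt : n % 6 < 6 := Int.emod_lt_of_pos n (by norm_num)
  refine ⟨(n % 6).toNat, by omega, ?_⟩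
  rw [hg, ← hmod, ← zpow_natCast, Int.toNat_of_nonneg hnn]

theorem aut_al1 : ∀ g : Perm (Fin 6), g * sig = sig * g → g * al1 = al1 * g →
    g = 1 ∨ g = (sig * al1) ^ 3 := by
  intro g hgs hga
  have hcom : g * (sig * al1) = (sig * al1) * g := by
    rw [← mul_assoc, hgs, mul_assoc, hga, ← mul_assoc]
  obtain ⟨k, hk, rfl⟩ := central_pow cycleType_f1 hcom
  interval_cases k
  · exact Or.inl (pow_zero _)
  · exact absurd hgs (by decide)
  · exact absurd hgs (by decide)
  · exact Or.inr rfl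
  · exact absurd hgs (by decide)
  · exact absurd hgs (by decide)

theorem aut_al2 : ∀ g : Perm (Fin 6), g * sig = sig * g → g * al2 = al2 * g →
    g = 1 := by
  intro g hgs hga
  have hcom : g * (sig * al2) = (sig * al2) * g := by
    rw [← mul_assoc, hgs, mul_assoc, hga, ← mul_assoc]
  obtain ⟨k, hk, rfl⟩ := central_pow cycleType_f2 hcom
  interval_cases k
  · exact pow_zero _
  · exact absurd hgs (by decide)
  · exact absurd hgs (by decide)
  · exact absurd hgs (by decide)
  · exact absurd hgs (by decide)
  · exact absurd hgs (by decide)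

theorem autCard_rep1 : autCard (sig, al1) = 2 := by
  rw [autCard, ← Finset.card_univ, Finset.card_eq_two]
  refine ⟨⟨1, by rw [one_mul, mul_one], by rw [one_mul, mul_one]⟩,
    ⟨(sig * al1) ^ 3, by decide, by decide⟩, ?_, ?_⟩
  · intro h
    have := congrArg Subtype.val h
    exact absurd this (by decide)
  · symm
    apply Finset.eq_univ_iff_forall.mpr
    intro z
    simp only [Finset.mem_insert, Finset.mem_singleton]
    rcases aut_al1 z.1 z.2.1 z.2.2 with h | h
    · exact Or.inl (Subtype.ext h)
    · exact Or.inr (Subtype.ext h)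

theorem autCard_rep2 : autCard (sig, al2) = 1 := by
  rw [autCard, Fintype.card_eq_one_iff]
  refine ⟨⟨1, by rw [one_mul, mul_one], by rw [one_mul, mul_one]⟩, ?_⟩
  intro y
  exact Subtype.ext (aut_al2 y.1 y.2.1 y.2.2)

end Stmt3Aux

open Stmt3Aux

/-- for the passport `a₁²a₄b₁²b₂²` (trees with `6` edges, white
vertices of degrees `1,1,4`, black vertices of degrees `1,1,2,2`) there are
exactly two plane bipartite trees, one with automorphism group of order `2`
and one with trivial automorphism group, and `1 + 1/2 = 2!·3!/(2!·2!·2!)`. -/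
theorem stmt3
    (kk ll : ℕ → ℕ)
    (hkk : kk = fun d => if d = 1 then 2 else if d = 4 then 1 else 0)
    (hll : ll = fun d => if d = 1 then 2 else if d = 2 then 2 else 0) :
    (∃ T₁ T₂ : Quotient (treeSetoid 6), T₁ ≠ T₂ ∧
      Finset.univ.filter (fun T : Quotient (treeSetoid 6) => HasPassportT kk ll T)
        = {T₁, T₂} ∧
      autCardT T₁ = 2 ∧ autCardT T₂ = 1) ∧
    (1 + 1 / 2 : ℚ) =
      (Nat.factorial 2 * Nat.factorial 3 : ℚ) /
        (Nat.factorial 2 * Nat.factorial 2 * Nat.factorial 2) := by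
  subst hkk hll
  have hT1 : IsPlaneBipTree (Stmt3Aux.sig, Stmt3Aux.al1) :=
    Stmt3Aux.isTree_of_types Stmt3Aux.cycleType_sig Stmt3Aux.cycleType_al1 Stmt3Aux.cycleType_f1
  have hT2 : IsPlaneBipTree (Stmt3Aux.sig, Stmt3Aux.al2) :=
    Stmt3Aux.isTree_of_types Stmt3Aux.cycleType_sig Stmt3Aux.cycleType_al2 Stmt3Aux.cycleType_f2
  constructor
  · refine ⟨Quotient.mk (treeSetoid 6) ⟨(Stmt3Aux.sig, Stmt3Aux.al1), hT1⟩,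
      Quotient.mk (treeSetoid 6) ⟨(Stmt3Aux.sig, Stmt3Aux.al2), hT2⟩, ?_, ?_, ?_, ?_⟩
    · intro h
      have hconj : conjRel (Stmt3Aux.sig, Stmt3Aux.al1) (Stmt3Aux.sig, Stmt3Aux.al2) :=
        Quotient.exact h
      have hca := autCard_conj _ _ hconj
      rw [Stmt3Aux.autCard_rep1, Stmt3Aux.autCard_rep2] at hca
      exact absurd hca (by norm_num)
    · apply Finset.ext
      intro T
      simp only [Finset.mem_filter, Finset.mem_univ, true_and, Finset.mem_insert,
        Finset.mem_singleton]
      constructor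
      · intro hpass
        obtain ⟨x, rfl⟩ := Quotient.exists_rep T
        obtain ⟨⟨σ, α⟩, hx⟩ := x
        have hp : ∀ d, 1 ≤ d →
            cycleCount σ d = (if d = 1 then 2 else if d = 4 then 1 else 0) ∧
            cycleCount α d = (if d = 1 then 2 else if d = 2 then 2 else 0) := hpass
        obtain ⟨h1, h2, h3⟩ := Stmt3Aux.types_of_passport hx hp
        rcases Stmt3Aux.classify h1 h2 h3 with h | h
        · exact Or.inl (Quotient.sound h)
        · exact Or.inr (Quotient.sound h)
      · rintro (rfl | rfl)
        · show ∀ d, 1 ≤ d → _ ∧ _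
          exact Stmt3Aux.passport_of_types Stmt3Aux.cycleType_sig Stmt3Aux.cycleType_al1
        · show ∀ d, 1 ≤ d → _ ∧ _
          exact Stmt3Aux.passport_of_types Stmt3Aux.cycleType_sig Stmt3Aux.cycleType_al2
    · exact Stmt3Aux.autCard_rep1
    · exact Stmt3Aux.autCard_rep2
  · norm_num [Nat.factorial]


end
end

section
/- Let β be a rational function of the form β(z) = ∏_{i=0}^n (z - x_i)^{k_i} / (z - c) with ∑ k_i = p+1, and suppose β - r = ∏_{j=0}^m (z - y_j)^{l_j} / (z - c) with ∑ l_j = p+1. Then the numerator of the derivative β' equals p · ∏_{i=0}^n (z - x_i)^{k_i - 1} · ∏_{j=0}^m (z - y_j)^{l_j - 1}, provided n + m = p - 1. -/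
open Polynomial

private lemma eq_C_mul_of_monic_dvd {K : Type*} [Field K] {F D : K[X]}
    (hD : D.Monic) (hdvd : D ∣ F) (hdeg : F.natDegree ≤ D.natDegree) :
    F = C (F.coeff D.natDegree) * D := by
  obtain ⟨q, rfl⟩ := hdvd
  rcases eq_or_ne q 0 with rfl | hq
  · simp
  · have hnd : (D * q).natDegree = D.natDegree + q.natDegree :=
      natDegree_mul hD.ne_zero hq
    have hq0 : q.natDegree = 0 := by omega
    obtain ⟨a, rfl⟩ : ∃ a, q = C a := ⟨q.coeff 0, (eq_C_of_natDegree_eq_zero hq0)⟩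
    rw [coeff_mul_C, hD.coeff_natDegree, one_mul, mul_comm]

/-- Let `β(z) = ∏ (z - xᵢ)^{kᵢ}/(z - c)` with `∑ kᵢ = p + 1`, and
suppose `β - r = ∏ (z - yⱼ)^{lⱼ}/(z - c)` with `∑ lⱼ = p + 1`.  Then the
numerator of `β'`, namely `P'(z)(z - c) - P(z)` where `P = ∏ (z - xᵢ)^{kᵢ}`,
equals `p · ∏ (z - xᵢ)^{kᵢ - 1} · ∏ (z - yⱼ)^{lⱼ - 1}`, provided
`n + m = p - 1`. -/
theorem stmt8 {K : Type*} [Field K]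
    (p n m : ℕ) (hp : p.Prime) (hnm : n + m = p - 1)
    (x : Fin (n + 1) → K) (k : Fin (n + 1) → ℕ)
    (y : Fin (m + 1) → K) (l : Fin (m + 1) → ℕ)
    (c r : K)
    (hx_inj : Function.Injective x) (hy_inj : Function.Injective y)
    (hxy : ∀ i j, x i ≠ y j)
    (hk_pos : ∀ i, 0 < k i) (hl_pos : ∀ j, 0 < l j)
    (hk_sum : ∑ i, k i = p + 1) (hl_sum : ∑ j, l j = p + 1)
    (hbeta : (∏ i, (X - C (x i)) ^ k i) - C r * (X - C c)
        = ∏ j, (X - C (y j)) ^ l j) :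
    derivative (∏ i, (X - C (x i)) ^ k i) * (X - C c)
        - ∏ i, (X - C (x i)) ^ k i
      = C ((p : K)) * (∏ i, (X - C (x i)) ^ (k i - 1))
          * ∏ j, (X - C (y j)) ^ (l j - 1) := by
  have hp2 : 2 ≤ p := hp.two_le
  set P : K[X] := ∏ i, (X - C (x i)) ^ k i with hP
  set Q : K[X] := ∏ j, (X - C (y j)) ^ l j with hQ
  set F : K[X] := derivative P * (X - C c) - P with hF
  -- F in terms of Q
  have hF2 : F = derivative Q * (X - C c) - Q := by
    rw [hF, ← hbeta]
    simp only [derivative_sub, derivative_mul, derivative_C, derivative_X, derivative_sub]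
    ring
  -- the target divisor, combined over a sum type
  set g : Fin (n + 1) ⊕ Fin (m + 1) → K[X] :=
    Sum.elim (fun i => (X - C (x i)) ^ (k i - 1)) (fun j => (X - C (y j)) ^ (l j - 1))
    with hg
  set D : K[X] := ∏ s, g s with hD
  have hDsplit : D = (∏ i, (X - C (x i)) ^ (k i - 1)) * ∏ j, (X - C (y j)) ^ (l j - 1) := by
    rw [hD, Fintype.prod_sum_type]; simp [hg]
  -- coordinates are injective over the sum type
  have hinj : Function.Injective (Sum.elim x y : Fin (n + 1) ⊕ Fin (m + 1) → K) := by
    rintro (i | i) (j | j) h <;> simp only [Sum.elim_inl, Sum.elim_inr] at h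
    · rw [hx_inj h]
    · exact absurd h (hxy i j)
    · exact absurd h.symm (hxy j i)
    · rw [hy_inj h]
  -- each g s divides F
  have hgF : ∀ s, g s ∣ F := by
    rintro (i | j)
    · have h1 : (X - C (x i)) ^ k i ∣ P :=
        Finset.dvd_prod_of_mem _ (Finset.mem_univ i)
      have h2 : (X - C (x i)) ^ (k i - 1) ∣ derivative P :=
        pow_sub_one_dvd_derivative_of_pow_dvd h1
      have h3 : (X - C (x i)) ^ (k i - 1) ∣ P :=
        dvd_trans (pow_dvd_pow _ (Nat.sub_le _ _)) h1
      exact dvd_sub (h2.mul_right _) h3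
    · rw [hF2]
      have h1 : (X - C (y j)) ^ l j ∣ Q :=
        Finset.dvd_prod_of_mem _ (Finset.mem_univ j)
      have h2 : (X - C (y j)) ^ (l j - 1) ∣ derivative Q :=
        pow_sub_one_dvd_derivative_of_pow_dvd h1
      have h3 : (X - C (y j)) ^ (l j - 1) ∣ Q :=
        dvd_trans (pow_dvd_pow _ (Nat.sub_le _ _)) h1
      exact dvd_sub (h2.mul_right _) h3
  -- D divides F
  have hDdvd : D ∣ F := by
    refine Fintype.prod_dvd_of_coprime ?_ hgF
    intro s t hst
    have := (pairwise_coprime_X_sub_C hinj hst)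
    rcases s with i | i <;> rcases t with j | j <;>
      simpa [hg, Function.onFun] using this.pow
  -- D is monic of degree p + 1
  have hDmonic : D.Monic :=
    monic_prod_of_monic _ _ fun s _ => by
      rcases s with i | j <;> exact (monic_X_sub_C _).pow _
  have hsumk : ∑ i, (k i - 1) + (n + 1) = p + 1 := by
    have : ∑ i, k i = ∑ i, ((k i - 1) + 1) :=
      Finset.sum_congr rfl fun i _ => by have := hk_pos i; omega
    rw [Finset.sum_add_distrib] at this
    simp only [Finset.sum_const, Finset.card_univ, Fintype.card_fin, smul_eq_mul, mul_one] at this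
    omega
  have hsuml : ∑ j, (l j - 1) + (m + 1) = p + 1 := by
    have : ∑ j, l j = ∑ j, ((l j - 1) + 1) :=
      Finset.sum_congr rfl fun j _ => by have := hl_pos j; omega
    rw [Finset.sum_add_distrib] at this
    simp only [Finset.sum_const, Finset.card_univ, Fintype.card_fin, smul_eq_mul, mul_one] at this
    omega
  have hDdeg : D.natDegree = p + 1 := by
    rw [hD, natDegree_prod _ _ fun s _ => by
      rcases s with i | j <;> exact pow_ne_zero _ (X_sub_C_ne_zero _)]
    have : ∀ s : Fin (n + 1) ⊕ Fin (m + 1), (g s).natDegree =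
        Sum.elim (fun i => k i - 1) (fun j => l j - 1) s := by
      rintro (i | j) <;> simp [hg, natDegree_pow]
    rw [Fintype.sum_congr _ _ this, Fintype.sum_sum_type]
    simp only [Sum.elim_inl, Sum.elim_inr]
    omega
  -- degree and top coefficient of F
  have hPmonic : P.Monic := monic_prod_of_monic _ _ fun i _ => (monic_X_sub_C _).pow _
  have hPdeg : P.natDegree = p + 1 := by
    rw [hP, natDegree_prod _ _ fun i _ => pow_ne_zero _ (X_sub_C_ne_zero _)]
    simp only [natDegree_pow, natDegree_X_sub_C, mul_one]
    exact hk_sum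
  have hP'deg : (derivative P).natDegree ≤ p := by
    have := natDegree_derivative_le P
    omega
  have hFdeg : F.natDegree ≤ p + 1 := by
    refine le_trans (natDegree_sub_le _ _) ?_
    simp only [max_le_iff]
    constructor
    · refine le_trans (natDegree_mul_le) ?_
      have : (X - C c).natDegree = 1 := natDegree_X_sub_C c
      omega
    · omega
  have hFcoeff : F.coeff (p + 1) = (p : K) := by
    have h1 : (derivative P * (X - C c)).coeff (p + 1)
        = (derivative P).coeff p - c * (derivative P).coeff (p + 1) := by
      rw [mul_sub, mul_comm _ (C c), coeff_sub, coeff_mul_X, coeff_C_mul]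
    have h2 : (derivative P).coeff (p + 1) = 0 :=
      coeff_eq_zero_of_natDegree_lt (by omega)
    have h3 : (derivative P).coeff p = (p : K) + 1 := by
      rw [coeff_derivative]
      have : P.coeff (p + 1) = 1 := by
        have := hPmonic.coeff_natDegree
        rwa [hPdeg] at this
      rw [this]
      ring
    have h4 : P.coeff (p + 1) = 1 := by
      have := hPmonic.coeff_natDegree
      rwa [hPdeg] at this
    rw [hF, coeff_sub, h1, h2, h3, h4]
    ring
  -- conclude
  have := eq_C_mul_of_monic_dvd hDmonic hDdvd (by omega)
  rw [hDdeg, hFcoeff] at this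
  calc F = C (p : K) * D := this
    _ = _ := by rw [hDsplit]; ring
end

section
/- Let β be a normalized model of a 2^1-map with p+1 edges, and suppose the coordinate x_s of exactly one white vertex v_s of degree 1 does not lie in I (and 0 is a white vertex of degree > 1). Then v_ρ(x_i) = e/(n-1) for all i ≠ s with x_i ≠ 0, and v_ρ(x_i - x_j) = e/(n-1) for all i, j ≠ s with i ≠ j. -/
open Polynomial Finset

namespace Stmt12Aux

variable {K : Type*} [Field K] (v : AddValuation K (WithTop ℝ))


variable {K : Type*} [Field K] (v : AddValuation K (WithTop ℝ))

lemma v_ne_top {z : K} (hz : z ≠ 0) : v z ≠ ⊤ := by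
  intro h
  have h1 : v (z * z⁻¹) = v z + v z⁻¹ := v.map_mul _ _
  rw [mul_inv_cancel₀ hz, v.map_one, h] at h1
  simp at h1

lemma v_prod {ι : Type*} (s : Finset ι) (f : ι → K) :
    v (∏ i ∈ s, f i) = ∑ i ∈ s, v (f i) := by
  classical
  induction s using Finset.cons_induction with
  | empty => simp [v.map_one]
  | cons a s ha ih => rw [Finset.prod_cons, Finset.sum_cons, v.map_mul, ih]

lemma v_sum_lt {ι : Type*} (s : Finset ι) (f : ι → K) {C : WithTop ℝ} (hCt : C ≠ ⊤)
    (hC : ∀ i ∈ s, C < v (f i)) : C < v (∑ i ∈ s, f i) := by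
  classical
  induction s using Finset.cons_induction with
  | empty => rw [Finset.sum_empty, v.map_zero]; exact lt_top_iff_ne_top.mpr hCt
  | cons a s ha ih =>
      rw [Finset.sum_cons]
      refine lt_of_lt_of_le ?_ (v.map_add _ _)
      rw [lt_inf_iff]
      exact ⟨hC a (Finset.mem_cons_self a s), ih fun i hi => hC i (Finset.mem_cons.2 (Or.inr hi))⟩

lemma v_sub_rev (a b : K) : v (a - b) = v (b - a) := by
  rw [show a - b = -(b - a) by ring, v.map_neg]

lemma v_add_eq_left {a b : K} (h : v a < v b) : v (a + b) = v a := by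
  have h1 : min (v a) (v b) ≤ v (a + b) := v.map_add a b
  rw [min_eq_left h.le] at h1
  refine le_antisymm ?_ h1
  by_contra hcon
  push_neg at hcon
  have h2 : a = (a + b) - b := by ring
  have h3 : min (v (a+b)) (v b) ≤ v a := by
    calc min (v (a+b)) (v b) ≤ v ((a+b) + (-b)) := by
          have := v.map_add (a+b) (-b)
          rwa [v.map_neg] at this
      _ = v a := by rw [← sub_eq_add_neg, ← h2]
  rcases min_le_iff.mp h3 with h4 | h4
  · exact absurd h4 (not_le.mpr hcon)
  · exact absurd h4 (not_le.mpr h)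

lemma v_sub_eq_left {a b : K} (h : v a < v b) : v (a - b) = v a := by
  rw [sub_eq_add_neg, v_add_eq_left]; rwa [v.map_neg]

lemma v_sub_eq_right {a b : K} (h : v b < v a) : v (a - b) = v b := by
  rw [v_sub_rev]; exact v_sub_eq_left v h

lemma v_sub_ge_min (a b : K) : min (v a) (v b) ≤ v (a - b) := by
  rw [sub_eq_add_neg]
  have := v.map_add a (-b)
  rwa [v.map_neg] at this

/-- `Rel v a b` : `a` is (multiplicatively) close to `b`. -/
def Rel (a b : K) : Prop := v b < v (a - b)

lemma Rel.vEq {a b : K} (h : Rel v a b) : v a = v b := by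
  have h' : v b < v (a - b) := h
  have : v (b + (a - b)) = v b := v_add_eq_left v h'
  rwa [add_sub_cancel] at this

lemma Rel.bne {a b : K} (h : Rel v a b) : b ≠ 0 := by
  intro hb
  have h' : v b < v (a - b) := h
  rw [hb, v.map_zero] at h'
  exact absurd h' (by simp)

lemma Rel.ane {a b : K} (h : Rel v a b) : a ≠ 0 := by
  intro hb
  have := Rel.vEq v h
  rw [hb, v.map_zero] at this
  exact (v_ne_top v (Rel.bne v h)) this.symm

lemma Rel.symm {a b : K} (h : Rel v a b) : Rel v b a := by
  have h' : v b < v (a - b) := h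
  show v a < v (b - a)
  rwa [v_sub_rev, ← Rel.vEq v h] at h'

lemma Rel.refl {a : K} (ha : a ≠ 0) : Rel v a a := by
  show v a < v (a - a)
  rw [sub_self, v.map_zero]
  exact lt_top_iff_ne_top.mpr (v_ne_top v ha)

lemma Rel.mul {a b a' b' : K} (h : Rel v a b) (h' : Rel v a' b') :
    Rel v (a * a') (b * b') := by
  have hh : v b < v (a - b) := h
  have hh' : v b' < v (a' - b') := h'
  show v (b * b') < v (a * a' - b * b')
  have key : a * a' - b * b' = a * (a' - b') + (a - b) * b' := by ring
  rw [key, v.map_mul]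
  have hvab : v a = v b := Rel.vEq v h
  have hfin : v b ≠ ⊤ := v_ne_top v (Rel.bne v h)
  have hfin' : v b' ≠ ⊤ := v_ne_top v (Rel.bne v h')
  have h1 : v b + v b' < v a + v (a' - b') := by
    rw [hvab]; exact WithTop.add_lt_add_left hfin hh'
  have h2 : v b + v b' < v (a - b) + v b' := by
    rw [add_comm (v b) (v b'), add_comm _ (v b')]
    exact WithTop.add_lt_add_left hfin' hh
  calc v b + v b' < min (v (a * (a' - b'))) (v ((a - b) * b')) := by
        rw [lt_inf_iff, v.map_mul, v.map_mul]; exact ⟨h1, h2⟩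
    _ ≤ v (a * (a' - b') + (a - b) * b') := v.map_add _ _

lemma Rel.prod {ι : Type*} (s : Finset ι) (f g : ι → K)
    (h : ∀ i ∈ s, Rel v (f i) (g i)) :
    Rel v (∏ i ∈ s, f i) (∏ i ∈ s, g i) := by
  classical
  induction s using Finset.cons_induction with
  | empty => simpa using Rel.refl v (one_ne_zero)
  | cons a s ha ih =>
      rw [Finset.prod_cons, Finset.prod_cons]
      exact Rel.mul v (h a (Finset.mem_cons_self a s))
        (ih fun i hi => h i (Finset.mem_cons.2 (Or.inr hi)))

lemma Rel.pow {a b : K} (h : Rel v a b) (t : ℕ) : Rel v (a ^ t) (b ^ t) := by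
  induction t with
  | zero => simpa using Rel.refl v (one_ne_zero)
  | succ t ih => rw [pow_succ, pow_succ]; exact Rel.mul v ih h

lemma v_nat_nonneg (t : ℕ) : 0 ≤ v (t : K) := by
  induction t with
  | zero => simp [v.map_zero]
  | succ u ih =>
      push_cast
      calc (0:WithTop ℝ) ≤ min (v ((u:K))) (v 1) := by
            rw [v.map_one]
            exact le_min ih (le_refl 0)
        _ ≤ v ((u:K) + 1) := v.map_add _ _

lemma v_int_nonneg (t : ℤ) : 0 ≤ v (t : K) := by
  rcases le_or_gt 0 t with h | h
  · lift t to ℕ using h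
    exact_mod_cast v_nat_nonneg v t
  · have h3 : t = -((t.natAbs : ℤ)) := by omega
    have h2 : ((t:K)) = -(((t.natAbs : ℕ) : K)) := by
      conv_lhs => rw [h3]
      rw [Int.cast_neg, Int.cast_natCast]
    rw [h2, v.map_neg]
    exact v_nat_nonneg v _

/-- a natural number `0 < t < p` has valuation zero when `v p = e > 0`. -/
lemma v_nat_coprime {p t : ℕ} (hp : p.Prime) (ht0 : 0 < t) (htp : t < p)
    {e : ℝ} (hvp : v (p : K) = (e : WithTop ℝ)) (he : 0 < e) :
    v (t : K) = 0 := by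
  have hnd : ¬ (p ∣ t) := Nat.not_dvd_of_pos_of_lt ht0 htp
  have hcop : Nat.Coprime p t := (Nat.Prime.coprime_iff_not_dvd hp).mpr hnd
  have hic : IsCoprime (p : ℤ) (t : ℤ) := by
    rw [Int.isCoprime_iff_gcd_eq_one]
    exact_mod_cast hcop
  obtain ⟨a, b, hab⟩ := hic
  have habK : (a : K) * (p : K) + (b : K) * (t : K) = 1 := by
    have := congrArg (fun z : ℤ => (z : K)) hab
    push_cast at this
    convert this using 2 <;> push_cast <;> ring
  refine le_antisymm ?_ (v_nat_nonneg v t)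
  by_contra hcon
  push_neg at hcon
  have h1 : (0 : WithTop ℝ) < v ((a:K) * (p:K)) := by
    rw [v.map_mul, hvp]
    calc (0:WithTop ℝ) = 0 + 0 := by simp
      _ ≤ v (a:K) + 0 := by
          exact add_le_add_left (v_int_nonneg v a) 0
      _ < v (a:K) + (e : WithTop ℝ) := by
          refine WithTop.add_lt_add_left (v_ne_top v ?_) ?_
          · intro ha0
            rw [ha0, zero_mul, zero_add] at habK
            have : (0:WithTop ℝ) < v ((b:K) * (t:K)) := by
              rw [v.map_mul]
              calc (0:WithTop ℝ) = 0 + 0 := by simp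
                _ ≤ v (b:K) + 0 := add_le_add_left (v_int_nonneg v b) 0
                _ < v (b:K) + v (t:K) := WithTop.add_lt_add_left (v_ne_top v (by
                    intro hb0
                    rw [hb0, zero_mul] at habK
                    simp at habK)) hcon
            rw [habK, v.map_one] at this
            exact absurd this (by simp)
          · exact_mod_cast he
  have h2 : (0 : WithTop ℝ) < v ((b:K) * (t:K)) := by
    rw [v.map_mul]
    calc (0:WithTop ℝ) = 0 + 0 := by simp
      _ ≤ v (b:K) + 0 := add_le_add_left (v_int_nonneg v b) 0
      _ < v (b:K) + v (t:K) := by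
          refine WithTop.add_lt_add_left (v_ne_top v ?_) hcon
          intro hb0
          rw [hb0, zero_mul, add_zero] at habK
          have : v ((a:K) * (p:K)) = 0 := by rw [habK, v.map_one]
          rw [v.map_mul, hvp] at this
          have ha := v_int_nonneg (v := v) a
          -- v a + e = 0 with v a ≥ 0, e > 0 : contradiction
          rcases eq_or_ne (v (a:K)) ⊤ with htop | htop
          · rw [htop] at this; simp at this
          · lift (v (a:K)) to ℝ using htop with va hva
            rw [show ((va:WithTop ℝ) + (e:WithTop ℝ)) = ((va + e : ℝ) : WithTop ℝ) by push_cast; ring] at this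
            have : va + e = 0 := by exact_mod_cast this
            have hva0 : (0:ℝ) ≤ va := by exact_mod_cast ha
            linarith
  have : (0:WithTop ℝ) < v 1 := by
    rw [← habK]
    calc (0:WithTop ℝ) < min (v ((a:K)*(p:K))) (v ((b:K)*(t:K))) := lt_min h1 h2
      _ ≤ _ := v.map_add _ _
  rw [v.map_one] at this
  exact absurd this (by simp)

/-- Lagrange: sum of inverses of `∏ (f t - f u)` vanishes. -/
lemma lagrange_sum_inv {ι : Type*} [DecidableEq ι] (s : Finset ι) (f : ι → K)
    (hinj : Set.InjOn f s) (hcard : 2 ≤ s.card) :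
    ∑ t ∈ s, (∏ u ∈ s.erase t, (f t - f u))⁻¹ = 0 := by
  have hne : s.Nonempty := Finset.card_pos.mp (by omega)
  have h1 : ∑ j ∈ s, Lagrange.basis s f j = 1 := Lagrange.sum_basis hinj hne
  have h2 := congrArg (fun q : K[X] => q.coeff (s.card - 1)) h1
  simp only [finset_sum_coeff] at h2
  have h3 : (1 : K[X]).coeff (s.card - 1) = 0 := by
    rw [coeff_one]
    simp only [ite_eq_right_iff]
    intro h; omega
  rw [h3] at h2
  rw [← h2]
  refine Finset.sum_congr rfl fun t ht => ?_
  have hmon : (∏ u ∈ s.erase t, (X - C (f u))).Monic :=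
    monic_prod_of_monic _ _ fun u _ => monic_X_sub_C (f u)
  have hdeg : (∏ u ∈ s.erase t, (X - C (f u))).natDegree = s.card - 1 := by
    rw [natDegree_prod _ _ fun u _ => X_sub_C_ne_zero (f u)]
    simp [natDegree_X_sub_C, Finset.card_erase_of_mem ht]
  have hb : Lagrange.basis s f t
      = C (∏ u ∈ s.erase t, (f t - f u)⁻¹) * ∏ u ∈ s.erase t, (X - C (f u)) := by
    rw [Lagrange.basis, map_prod, ← Finset.prod_mul_distrib]
    exact Finset.prod_congr rfl fun u hu => rfl
  rw [hb, coeff_C_mul, ← hdeg, Monic.coeff_natDegree hmon, mul_one,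
    Finset.prod_inv_distrib]



/-- The key exact identity: for each white vertex `i`,
`k i * (x i - c) * ∏_{i'≠i} (x i - x i') = p * ∏_j (x i - y j)^(l j - 1)`. -/
lemma key_identity {K : Type*} [Field K] {p n m : ℕ}
    (x : Fin (n+1) → K) (k : Fin (n+1) → ℕ) (y : Fin (m+1) → K) (l : Fin (m+1) → ℕ)
    (c r : K)
    (hx : Function.Injective x) (hy : Function.Injective y)
    (hkpos : ∀ i, 0 < k i) (hlpos : ∀ j, 0 < l j)
    (hksum : ∑ i, k i = p + 1) (hlsum : ∑ j, l j = p + 1)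
    (hnm : n + m = p - 1) (hp2 : 2 ≤ p)
    (hpK : (p : K) ≠ 0)
    (hxy : ∀ i j, 2 ≤ k i → 2 ≤ l j → x i ≠ y j)
    (hbelyi : (∏ i, (X - C (x i)) ^ k i) - C r * (X - C c) = ∏ j, (X - C (y j)) ^ l j) :
    ∀ i, (k i : K) * ((x i - c) * ∏ i' ∈ Finset.univ.erase i, (x i - x i'))
        = (p : K) * ∏ j, (x i - y j) ^ (l j - 1) := by
  classical
  set P : K[X] := ∏ i, (X - C (x i)) ^ k i with hPdef
  set Q : K[X] := ∏ j, (X - C (y j)) ^ l j with hQdef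
  have hPQ : P = Q + C r * (X - C c) := eq_add_of_sub_eq hbelyi
  have hPmonic : P.Monic := monic_prod_of_monic _ _ fun i _ => (monic_X_sub_C _).pow _
  have hPdeg : P.natDegree = p + 1 := by
    rw [hPdef, natDegree_prod _ _ fun i _ => pow_ne_zero _ (X_sub_C_ne_zero _)]
    simp only [natDegree_pow, natDegree_X_sub_C, mul_one]
    exact hksum
  set W : K[X] := (X - C c) * derivative P - P with hWdef
  have hWQ : W = (X - C c) * derivative Q - Q := by
    rw [hWdef, hPQ]
    rw [derivative_add, derivative_mul, derivative_C, derivative_X_sub_C]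
    ring
  -- top coefficient of W
  have hPcoefftop : P.coeff (p + 1) = 1 := by
    have := hPmonic.coeff_natDegree
    rwa [hPdeg] at this
  have hPcoeffbeyond : P.coeff (p + 2) = 0 :=
    coeff_eq_zero_of_natDegree_lt (by omega)
  have hWcoeff : W.coeff (p + 1) = (p : K) := by
    rw [hWdef, coeff_sub, sub_mul, coeff_sub]
    rw [coeff_X_mul, coeff_C_mul, coeff_derivative, coeff_derivative,
      hPcoefftop, hPcoeffbeyond]
    push_cast
    ring
  have hWne : W ≠ 0 := by
    intro h
    rw [h, coeff_zero] at hWcoeff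
    exact hpK hWcoeff.symm
  have hWdegle : W.natDegree ≤ p + 1 := by
    refine le_trans (natDegree_sub_le _ _) ?_
    rw [sup_le_iff]
    constructor
    · refine le_trans natDegree_mul_le ?_
      have h1 : (X - C c).natDegree = 1 := natDegree_X_sub_C c
      have h2 : (derivative P).natDegree ≤ p := by
        refine le_trans (natDegree_derivative_le P) ?_
        rw [hPdeg]
        omega
      omega
    · rw [hPdeg]
  have hWdeg : W.natDegree = p + 1 :=
    le_antisymm hWdegle (le_natDegree_of_ne_zero (by rw [hWcoeff]; exact hpK))
  -- white factorizations
  have hwhite : ∀ i : Fin (n+1), W = (X - C (x i)) ^ (k i - 1) *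
      ((X - C c) * (C (k i : K) * (∏ i' ∈ univ.erase i, (X - C (x i')) ^ k i')
          + (X - C (x i)) * derivative (∏ i' ∈ univ.erase i, (X - C (x i')) ^ k i'))
        - (X - C (x i)) * (∏ i' ∈ univ.erase i, (X - C (x i')) ^ k i')) := by
    intro i
    set T : K[X] := ∏ i' ∈ univ.erase i, (X - C (x i')) ^ k i' with hTdef
    have hPi : P = (X - C (x i)) ^ (k i) * T := by
      rw [hPdef, hTdef, ← Finset.mul_prod_erase univ _ (mem_univ i)]
    have hki : k i = (k i - 1) + 1 := by have := hkpos i; omega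
    have hP' : derivative P
        = C (k i : K) * (X - C (x i)) ^ (k i - 1) * T + (X - C (x i)) ^ (k i) * derivative T := by
      rw [hPi, derivative_mul, derivative_pow, derivative_X_sub_C, mul_one]
    have hpow : (X - C (x i)) ^ (k i) = (X - C (x i)) ^ (k i - 1) * (X - C (x i)) := by
      conv_lhs => rw [hki]
      rw [pow_succ]
    rw [hWdef, hP', hPi, hpow]
    ring
  -- black factorizations
  have hblack : ∀ j : Fin (m+1), (X - C (y j)) ^ (l j - 1) ∣ W := by
    intro j
    set T : K[X] := ∏ j' ∈ univ.erase j, (X - C (y j')) ^ l j' with hTdef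
    have hQj : Q = (X - C (y j)) ^ (l j) * T := by
      rw [hQdef, hTdef, ← Finset.mul_prod_erase univ _ (mem_univ j)]
    have hlj : l j = (l j - 1) + 1 := by have := hlpos j; omega
    have hQ' : derivative Q
        = C (l j : K) * (X - C (y j)) ^ (l j - 1) * T + (X - C (y j)) ^ (l j) * derivative T := by
      rw [hQj, derivative_mul, derivative_pow, derivative_X_sub_C, mul_one]
    refine ⟨(X - C c) * (C (l j : K) * T + (X - C (y j)) * derivative T)
        - (X - C (y j)) * T, ?_⟩
    have hpow : (X - C (y j)) ^ (l j) = (X - C (y j)) ^ (l j - 1) * (X - C (y j)) := by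
      conv_lhs => rw [hlj]
      rw [pow_succ]
    rw [hWQ, hQ', hQj, hpow]
    ring
  -- the combined divisor
  set Dp : K[X] := ∏ i, (X - C (x i)) ^ (k i - 1) with hDpdef
  set Dq : K[X] := ∏ j, (X - C (y j)) ^ (l j - 1) with hDqdef
  have hdvdP : Dp ∣ W := by
    refine Finset.prod_dvd_of_coprime ?_ fun i _ => ⟨_, hwhite i⟩
    intro i _ i' _ hne
    exact (isCoprime_X_sub_C_of_isUnit_sub
      (IsUnit.of_mul_eq_one (x i - x i')⁻¹ (mul_inv_cancel₀
        (sub_ne_zero.mpr fun h => hne (hx h))))).pow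
  have hdvdQ : Dq ∣ W := by
    refine Finset.prod_dvd_of_coprime ?_ fun j _ => hblack j
    intro j _ j' _ hne
    exact (isCoprime_X_sub_C_of_isUnit_sub
      (IsUnit.of_mul_eq_one (y j - y j')⁻¹ (mul_inv_cancel₀
        (sub_ne_zero.mpr fun h => hne (hy h))))).pow
  have hcross : ∀ i j, IsCoprime ((X - C (x i)) ^ (k i - 1)) ((X - C (y j)) ^ (l j - 1)) := by
    intro i j
    rcases Nat.eq_zero_or_pos (k i - 1) with h0 | hpos
    · rw [h0, pow_zero]; exact isCoprime_one_left
    rcases Nat.eq_zero_or_pos (l j - 1) with h0' | hpos'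
    · rw [h0', pow_zero]; exact isCoprime_one_right
    have hki : 2 ≤ k i := by have := hkpos i; omega
    have hlj : 2 ≤ l j := by have := hlpos j; omega
    exact (isCoprime_X_sub_C_of_isUnit_sub
      (IsUnit.of_mul_eq_one (x i - y j)⁻¹ (mul_inv_cancel₀
        (sub_ne_zero.mpr (hxy i j hki hlj))))).pow
  have hcop : IsCoprime Dp Dq :=
    IsCoprime.prod_left fun i _ => IsCoprime.prod_right fun j _ => hcross i j
  have hdvd : Dp * Dq ∣ W := hcop.mul_dvd hdvdP hdvdQ
  -- degree of Dp * Dq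
  have hSk : (∑ i, (k i - 1)) + (n + 1) = p + 1 := by
    have h1 : ∑ i : Fin (n+1), ((k i - 1) + 1) = ∑ i, k i :=
      Finset.sum_congr rfl fun i _ => by have := hkpos i; omega
    rw [Finset.sum_add_distrib, Finset.sum_const, card_univ, Fintype.card_fin,
      smul_eq_mul, mul_one] at h1
    omega
  have hSl : (∑ j, (l j - 1)) + (m + 1) = p + 1 := by
    have h1 : ∑ j : Fin (m+1), ((l j - 1) + 1) = ∑ j, l j :=
      Finset.sum_congr rfl fun j _ => by have := hlpos j; omega
    rw [Finset.sum_add_distrib, Finset.sum_const, card_univ, Fintype.card_fin,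
      smul_eq_mul, mul_one] at h1
    omega
  have hDpdeg : Dp.natDegree = ∑ i, (k i - 1) := by
    rw [hDpdef, natDegree_prod _ _ fun i _ => pow_ne_zero _ (X_sub_C_ne_zero _)]
    simp only [natDegree_pow, natDegree_X_sub_C, mul_one]
  have hDqdeg : Dq.natDegree = ∑ j, (l j - 1) := by
    rw [hDqdef, natDegree_prod _ _ fun j _ => pow_ne_zero _ (X_sub_C_ne_zero _)]
    simp only [natDegree_pow, natDegree_X_sub_C, mul_one]
  have hDpne : Dp ≠ 0 := by
    rw [hDpdef]
    exact Finset.prod_ne_zero_iff.mpr fun i _ => pow_ne_zero _ (X_sub_C_ne_zero _)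
  have hDqne : Dq ≠ 0 := by
    rw [hDqdef]
    exact Finset.prod_ne_zero_iff.mpr fun j _ => pow_ne_zero _ (X_sub_C_ne_zero _)
  have hDdeg : (Dp * Dq).natDegree = p + 1 := by
    rw [natDegree_mul hDpne hDqne, hDpdeg, hDqdeg]
    omega
  have hDmonic : (Dp * Dq).Monic := by
    refine Monic.mul ?_ ?_
    · exact monic_prod_of_monic _ _ fun i _ => (monic_X_sub_C _).pow _
    · exact monic_prod_of_monic _ _ fun j _ => (monic_X_sub_C _).pow _
  -- W = (Dp * Dq) * C p
  obtain ⟨q, hq⟩ := hdvd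
  have hqne : q ≠ 0 := by
    intro h; rw [h, mul_zero] at hq; exact hWne hq
  have hqdeg : q.natDegree = 0 := by
    have := hWdeg
    rw [hq, natDegree_mul (mul_ne_zero hDpne hDqne) hqne, hDdeg] at this
    omega
  have hqC : q = C (q.coeff 0) := eq_C_of_natDegree_eq_zero hqdeg
  have hqval : q.coeff 0 = (p : K) := by
    have h1 := hWcoeff
    rw [hq, hqC, coeff_mul_C] at h1
    have h2 : (Dp * Dq).coeff (p + 1) = 1 := by
      have := hDmonic.coeff_natDegree
      rwa [hDdeg] at this
    rw [h2, one_mul] at h1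
    exact h1
  have hW : W = Dp * Dq * C (p : K) := by rw [hq, hqC, hqval]
  -- now derive the identity for each i
  intro i
  set T : K[X] := ∏ i' ∈ univ.erase i, (X - C (x i')) ^ k i' with hTdef
  have hfact1 := hwhite i
  have hfact2 : W = (X - C (x i)) ^ (k i - 1) *
      ((∏ i' ∈ univ.erase i, (X - C (x i')) ^ (k i' - 1)) * Dq * C (p : K)) := by
    rw [hW, hDpdef, ← Finset.mul_prod_erase univ _ (mem_univ i)]
    ring
  have hGH := mul_left_cancel₀ (pow_ne_zero (k i - 1) (X_sub_C_ne_zero (x i)))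
    (hfact1.symm.trans hfact2)
  have heval := congrArg (fun f : K[X] => f.eval (x i)) hGH
  simp only [eval_sub, eval_mul, eval_add, eval_pow, eval_X, eval_C, eval_prod,
    sub_self, zero_mul, mul_zero, add_zero, sub_zero] at heval
  -- heval : (x i - c) * ((k i) * ∏ (x i - x i')^(k i')) = ∏ (x i - x i')^(k i' -1) * eval Dq * p
  have hsplit : (∏ i' ∈ univ.erase i, (x i - x i') ^ k i')
      = (∏ i' ∈ univ.erase i, (x i - x i') ^ (k i' - 1))
        * ∏ i' ∈ univ.erase i, (x i - x i') := by
    rw [← Finset.prod_mul_distrib]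
    refine Finset.prod_congr rfl fun i' hi' => ?_
    have : k i' = (k i' - 1) + 1 := by have := hkpos i'; omega
    conv_lhs => rw [this]
    rw [pow_succ]
  have hMne : (∏ i' ∈ univ.erase i, (x i - x i') ^ (k i' - 1)) ≠ 0 := by
    refine Finset.prod_ne_zero_iff.mpr fun i' hi' => ?_
    exact pow_ne_zero _ (sub_ne_zero.mpr fun h => (Finset.mem_erase.mp hi').1 (hx h).symm)
  have hDqeval : eval (x i) Dq = ∏ j, (x i - y j) ^ (l j - 1) := by
    rw [hDqdef, eval_prod]
    simp only [eval_pow, eval_sub, eval_X, eval_C]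
  rw [hsplit, hDqeval] at heval
  -- heval : (x i - c) * (k i * (M * N)) = M * (Y * p)  (roughly)
  apply mul_left_cancel₀ hMne
  calc (∏ i' ∈ univ.erase i, (x i - x i') ^ (k i' - 1))
        * ((k i : K) * ((x i - c) * ∏ i' ∈ univ.erase i, (x i - x i')))
      = (x i - c) * ((k i : K) * ((∏ i' ∈ univ.erase i, (x i - x i') ^ (k i' - 1))
          * ∏ i' ∈ univ.erase i, (x i - x i'))) := by ring
    _ = (∏ i' ∈ univ.erase i, (x i - x i') ^ (k i' - 1))
          * ((p : K) * ∏ j, (x i - y j) ^ (l j - 1)) := by rw [heval]; ring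

/-- The valuation-theoretic core. -/
lemma main_val {p n : ℕ} (hp : p.Prime) (hn : 2 ≤ n) {e : ℝ} (he : 0 < e)
    (hvp : v (p : K) = (e : WithTop ℝ))
    (x : Fin (n+1) → K) (k : Fin (n+1) → ℕ) (hx : Function.Injective x)
    (hkpos : ∀ i, 0 < k i)
    (s i0 : Fin (n+1)) (hi0s : i0 ≠ s) (hx0 : x i0 = 0)
    (hvxs : v (x s) = 0) (honly : ∀ i, i ≠ s → 0 < v (x i))
    (hkbound : ∀ i, i ≠ s → k i < p)
    (hkAbound : (∑ t ∈ (Finset.univ.erase s).erase i0, k t) + 2 ≤ p)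
    (c : K) (hvc : v c = 0)
    (Y : Fin (n+1) → K) (hvY : ∀ i, i ≠ s → v (Y i) = 0)
    (hYrel : ∀ t u, t ≠ u → t ≠ s → u ≠ s → Rel v (Y t) (Y u))
    (hkey : ∀ i, i ≠ s →
      (k i : K) * ((x i - c) * ∏ i' ∈ Finset.univ.erase i, (x i - x i'))
        = (p : K) * Y i) :
    (∀ i, i ≠ s → i ≠ i0 → v (x i) = ((e / ((n : ℝ) - 1) : ℝ) : WithTop ℝ)) ∧
    (∀ i j, i ≠ s → j ≠ s → i ≠ j →
      v (x i - x j) = ((e / ((n : ℝ) - 1) : ℝ) : WithTop ℝ)) := by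
  classical
  set A : Finset (Fin (n+1)) := (Finset.univ.erase s).erase i0 with hA
  have hi0us : i0 ∈ Finset.univ.erase s := Finset.mem_erase.mpr ⟨hi0s, Finset.mem_univ _⟩
  have hcardA : A.card = n - 1 := by
    rw [hA, Finset.card_erase_of_mem hi0us, Finset.card_erase_of_mem (Finset.mem_univ s),
      card_univ, Fintype.card_fin]
    omega
  have hAmem : ∀ {t}, t ∈ A ↔ (t ≠ i0 ∧ t ≠ s) := by
    intro t
    rw [hA]
    simp [Finset.mem_erase]
  -- basic nonvanishing facts
  have hxne : ∀ i, i ≠ s → i ≠ i0 → x i ≠ 0 := by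
    intro i his hii0 h
    exact hii0 (hx (h.trans hx0.symm))
  have hvxpos : ∀ i, i ∈ A → 0 < v (x i) := fun i hi => honly i (hAmem.mp hi).2
  -- the real-valued valuation
  set vv : K → ℝ := fun z => WithTop.untopD 0 (v z) with hvvdef
  have hvv : ∀ {z : K}, z ≠ 0 → v z = ((vv z : ℝ) : WithTop ℝ) := by
    intro z hz
    cases hvz : v z with
    | top => exact absurd hvz (v_ne_top v hz)
    | coe a => rw [hvvdef]; simp [hvz]
  have hvv0 : ∀ {z : K}, v z = 0 → vv z = 0 := by
    intro z hz
    rw [hvvdef]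
    simp only [hz]
    rfl
  have hvveq : ∀ {z w : K}, v z = v w → vv z = vv w := by
    intro z w h; rw [hvvdef]; simp only [h]
  set α : Fin (n+1) → ℝ := fun i => vv (x i) with hαdef
  set dd : Fin (n+1) → Fin (n+1) → ℝ := fun i j => vv (x i - x j) with hdddef
  have hddsymm : ∀ i j, dd i j = dd j i := by
    intro i j; rw [hdddef]; exact hvveq (v_sub_rev v _ _)
  have hαpos : ∀ i ∈ A, 0 < α i := by
    intro i hi
    have h1 := hvxpos i hi
    have h2 := hvv (hxne i (hAmem.mp hi).2 (hAmem.mp hi).1)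
    rw [h2] at h1
    exact_mod_cast h1
  -- coercion helpers for distinct white vertices
  have hvd : ∀ {t u : Fin (n+1)}, t ≠ u → v (x t - x u) = ((dd t u : ℝ) : WithTop ℝ) := by
    intro t u htu
    exact hvv (sub_ne_zero.mpr (fun h => htu (hx h)))
  have hrmin : ∀ {a b : K}, a ≠ 0 → b ≠ 0 → a ≠ b → min (vv a) (vv b) ≤ vv (a - b) := by
    intro a b ha hb hab
    have h1 := v_sub_ge_min v a b
    rw [hvv ha, hvv hb, hvv (sub_ne_zero.mpr hab), ← WithTop.coe_min] at h1
    exact_mod_cast h1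
  have hrleft : ∀ {a b : K}, a ≠ 0 → b ≠ 0 → vv a < vv b → vv (a - b) = vv a := by
    intro a b ha hb hlt
    have h1 : v a < v b := by rw [hvv ha, hvv hb]; exact_mod_cast hlt
    exact hvveq (v_sub_eq_left v h1)
  have hrright : ∀ {a b : K}, a ≠ 0 → b ≠ 0 → vv b < vv a → vv (a - b) = vv b := by
    intro a b ha hb hlt
    have h1 : v b < v a := by rw [hvv ha, hvv hb]; exact_mod_cast hlt
    exact hvveq (v_sub_eq_right v h1)
  -- coercion of real sums
  have hcoesum : ∀ (t : Finset (Fin (n+1))) (f : Fin (n+1) → ℝ),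
      (∑ i ∈ t, ((f i : ℝ) : WithTop ℝ)) = ((∑ i ∈ t, f i : ℝ) : WithTop ℝ) := by
    intro t f
    induction t using Finset.cons_induction with
    | empty => simp
    | cons a t ha ih => rw [Finset.sum_cons, Finset.sum_cons, ih, ← WithTop.coe_add]
  have hvxc : ∀ i, i ≠ s → v (x i - c) = 0 := by
    intro i his
    rw [v_sub_eq_right v (by rw [hvc]; exact honly i his)]
    exact hvc
  -- B1: the fundamental real equations
  have hVEQ : ∀ i, i ≠ s → ∑ i' ∈ Finset.univ.erase i, vv (x i - x i') = e := by
    intro i his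
    have hk := congrArg v (hkey i his)
    rw [v.map_mul, v.map_mul, v.map_mul, hvp, hvY i his, v_prod] at hk
    have hvk : v ((k i : ℕ) : K) = 0 := v_nat_coprime v hp (hkpos i) (hkbound i his) hvp he
    rw [hvk, hvxc i his, zero_add, zero_add, add_zero] at hk
    have h2 : ∑ i' ∈ Finset.univ.erase i, v (x i - x i')
        = ∑ i' ∈ Finset.univ.erase i, ((vv (x i - x i') : ℝ) : WithTop ℝ) :=
      Finset.sum_congr rfl fun i' hi' => hvd (Ne.symm (Finset.mem_erase.mp hi').1)
    rw [h2, hcoesum] at hk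
    exact_mod_cast hk
  have hdA : ∀ {i t : Fin (n+1)}, i ∈ A → t ∈ A → i ≠ t → min (α i) (α t) ≤ dd i t := by
    intro i t hi ht hit
    exact hrmin (hxne i (hAmem.mp hi).2 (hAmem.mp hi).1) (hxne t (hAmem.mp ht).2 (hAmem.mp ht).1)
      (fun h => hit (hx h))
  have hdAeq : ∀ {i t : Fin (n+1)}, i ∈ A → t ∈ A → i ≠ t → α i ≠ α t →
      dd i t = min (α i) (α t) := by
    intro i t hi ht hit hne
    rcases lt_or_gt_of_ne hne with h | h
    · rw [min_eq_left h.le, hdddef]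
      exact hrleft (hxne i (hAmem.mp hi).2 (hAmem.mp hi).1)
        (hxne t (hAmem.mp ht).2 (hAmem.mp ht).1) h
    · rw [min_eq_right h.le, hdddef]
      exact hrright (hxne i (hAmem.mp hi).2 (hAmem.mp hi).1)
        (hxne t (hAmem.mp ht).2 (hAmem.mp ht).1) h
  -- HEART and SPADE
  have hHEART : ∀ i ∈ A, α i + ∑ t ∈ A.erase i, dd i t = e := by
    intro i hi
    obtain ⟨hii0, his⟩ := hAmem.mp hi
    have h0 := hVEQ i his
    have hsmem : s ∈ Finset.univ.erase i := Finset.mem_erase.mpr ⟨Ne.symm his, Finset.mem_univ _⟩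
    rw [← Finset.add_sum_erase _ _ hsmem] at h0
    have hi0mem : i0 ∈ (Finset.univ.erase i).erase s :=
      Finset.mem_erase.mpr ⟨hi0s, Finset.mem_erase.mpr ⟨Ne.symm hii0, Finset.mem_univ _⟩⟩
    rw [← Finset.add_sum_erase _ _ hi0mem] at h0
    have hxis : vv (x i - x s) = 0 := by
      refine hvv0 ?_
      rw [v_sub_eq_right v (by rw [hvxs]; exact honly i his)]
      exact hvxs
    have hxii0 : vv (x i - x i0) = α i := by rw [hx0, sub_zero]
    have hset : ((Finset.univ.erase i).erase s).erase i0 = A.erase i := by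
      ext u
      simp only [hA, Finset.mem_erase, Finset.mem_univ, and_true]
      tauto
    rw [hxis, hxii0, hset, zero_add] at h0
    exact h0
  have hSPADE : ∑ t ∈ A, α t = e := by
    have h0 := hVEQ i0 hi0s
    have hsmem : s ∈ Finset.univ.erase i0 := Finset.mem_erase.mpr ⟨Ne.symm hi0s, Finset.mem_univ _⟩
    rw [← Finset.add_sum_erase _ _ hsmem] at h0
    have hxis : vv (x i0 - x s) = 0 := by
      refine hvv0 ?_
      rw [hx0, zero_sub, v.map_neg]
      exact hvxs
    have hset : (Finset.univ.erase i0).erase s = A := by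
      ext u
      simp only [hA, Finset.mem_erase, Finset.mem_univ, and_true]
      tauto
    rw [hxis, hset, zero_add] at h0
    rw [← h0]
    refine Finset.sum_congr rfl fun t ht => ?_
    rw [hαdef]
    refine (hvveq ?_).symm
    rw [hx0, zero_sub, v.map_neg]
  -- STEP 1 : no anomalous pairs
  have hNO : ∀ i ∈ A, ∀ t ∈ A, i ≠ t → dd i t = min (α i) (α t) := by
    by_contra hcon
    push_neg at hcon
    obtain ⟨i1, hi1A, t1, ht1A, hne1, hdne⟩ := hcon
    set AP : Finset (Fin (n+1) × Fin (n+1)) :=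
      (A ×ˢ A).filter (fun q => q.1 ≠ q.2 ∧ min (α q.1) (α q.2) < dd q.1 q.2) with hAPdef
    have hmem1 : (i1, t1) ∈ AP := by
      rw [hAPdef, Finset.mem_filter, Finset.mem_product]
      exact ⟨⟨hi1A, ht1A⟩, hne1, lt_of_le_of_ne (hdA hi1A ht1A hne1) (Ne.symm hdne)⟩
    obtain ⟨q0, hq0AP, hmax⟩ := Finset.exists_max_image AP (fun q => dd q.1 q.2) ⟨_, hmem1⟩
    obtain ⟨i, j⟩ := q0
    rw [hAPdef, Finset.mem_filter, Finset.mem_product] at hq0AP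
    obtain ⟨⟨hiA, hjA⟩, hij, hlt⟩ := hq0AP
    have haij : α i = α j := by
      by_contra hne2
      rw [hdAeq hiA hjA hij hne2] at hlt
      exact lt_irrefl _ hlt
    set b : ℝ := dd i j with hbdef
    have hab : α i < b := by
      calc α i = min (α i) (α j) := by rw [haij, min_self]
        _ < dd i j := hlt
    -- the cluster Z
    set Z : Finset (Fin (n+1)) := A.filter (fun t => t = i ∨ b ≤ dd t i) with hZdef
    have hZA : Z ⊆ A := Finset.filter_subset _ _
    have hiZ : i ∈ Z := by rw [hZdef]; exact Finset.mem_filter.mpr ⟨hiA, Or.inl rfl⟩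
    have hjZ : j ∈ Z := by
      rw [hZdef]
      refine Finset.mem_filter.mpr ⟨hjA, Or.inr ?_⟩
      rw [hddsymm j i]
    have hZs : ∀ t ∈ Z, t ≠ s := fun t ht => (hAmem.mp (hZA ht)).2
    have hZα : ∀ t ∈ Z, α t = α i := by
      intro t ht
      rw [hZdef, Finset.mem_filter] at ht
      obtain ⟨htA, hor⟩ := ht
      by_cases hti : t = i
      · rw [hti]
      · rcases hor with h | h
        · exact absurd h hti
        · by_contra hne3
          have h3 := hdAeq htA hiA hti hne3
          have h4 : dd t i ≤ α i := by rw [h3]; exact min_le_right _ _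
          have h5 : α i < dd t i := lt_of_lt_of_le hab h
          linarith
    have hZd : ∀ t ∈ Z, ∀ u ∈ Z, t ≠ u → dd t u = b := by
      intro t ht u hu htu
      have htA := hZA ht; have huA := hZA hu
      have hge : b ≤ dd t u := by
        by_cases hti : t = i
        · have h1 : b ≤ dd u i := by
            rw [hZdef, Finset.mem_filter] at hu
            rcases hu.2 with h | h
            · exact absurd (hti.trans h.symm) htu
            · exact h
          rw [hti, hddsymm i u]
          exact h1
        · by_cases hui : u = i
          · rw [hZdef, Finset.mem_filter] at ht
            rcases ht.2 with h | h
            · exact absurd h hti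
            · rw [hui]; exact h
          · have h1 : b ≤ dd t i := by
              rw [hZdef, Finset.mem_filter] at ht
              rcases ht.2 with h | h
              · exact absurd h hti
              · exact h
            have h2 : b ≤ dd u i := by
              rw [hZdef, Finset.mem_filter] at hu
              rcases hu.2 with h | h
              · exact absurd h hui
              · exact h
            have h3 : min (vv (x t - x i)) (vv (x u - x i)) ≤ vv ((x t - x i) - (x u - x i)) :=
              hrmin (sub_ne_zero.mpr fun h => hti (hx h)) (sub_ne_zero.mpr fun h => hui (hx h))
                (fun h => htu (hx (sub_left_inj.mp h)))
            rw [sub_sub_sub_cancel_right] at h3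
            calc b ≤ min (dd t i) (dd u i) := le_min h1 h2
              _ ≤ vv (x t - x u) := h3
      have hle : dd t u ≤ b := by
        have hmem2 : (t, u) ∈ AP := by
          rw [hAPdef, Finset.mem_filter, Finset.mem_product]
          refine ⟨⟨htA, huA⟩, htu, ?_⟩
          have h4 : min (α t) (α u) = α i := by rw [hZα t ht, hZα u hu, min_self]
          rw [h4]
          exact lt_of_lt_of_le hab hge
        exact hmax (t, u) hmem2
      linarith
    have hZcard : 2 ≤ Z.card := Finset.one_lt_card.mpr ⟨i, hiZ, j, hjZ, hij⟩
    have hbpos : (0:ℝ) < b := lt_trans (hαpos i hiA) hab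
    -- outside points are strictly closer
    have hsmall : ∀ t ∈ Z, ∀ i' ∈ Finset.univ \ Z, x t ≠ x i' ∧ v (x t - x i') < (b : WithTop ℝ) := by
      intro t ht i' hi'
      have hi'nZ : i' ∉ Z := (Finset.mem_sdiff.mp hi').2
      have hti' : t ≠ i' := fun h => hi'nZ (h ▸ ht)
      have hxnet : x t ≠ x i' := fun h => hti' (hx h)
      refine ⟨hxnet, ?_⟩
      have htA := hZA ht
      have hts := (hAmem.mp htA).2
      by_cases hi's : i' = s
      · have h1 : v (x t - x i') = 0 := by
          rw [hi's, v_sub_eq_right v (by rw [hvxs]; exact honly t hts)]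
          exact hvxs
        rw [h1]
        exact_mod_cast hbpos
      · by_cases hi'0 : i' = i0
        · have h1 : v (x t - x i') = ((α t : ℝ) : WithTop ℝ) := by
            rw [hi'0, hx0, sub_zero]
            exact hvv (hxne t hts (hAmem.mp htA).1)
          rw [h1, hZα t ht]
          exact_mod_cast hab
        · have hi'A : i' ∈ A := hAmem.mpr ⟨hi'0, hi's⟩
          have hnb : dd i' i < b := by
            by_contra hcon2
            push_neg at hcon2
            exact hi'nZ (by
              rw [hZdef]
              exact Finset.mem_filter.mpr ⟨hi'A, Or.inr hcon2⟩)
          have hii' : i ≠ i' := fun h => hi'nZ (h ▸ hiZ)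
          by_cases hti2 : t = i
          · rw [hti2, hvd hii']
            rw [hddsymm i i'] at *
            exact_mod_cast hnb
          · have hrw : x t - x i' = (x i - x i') + (x t - x i) := by ring
            have h1 : v (x i - x i') < v (x t - x i) := by
              rw [hvd hii', hvd (show t ≠ i from hti2)]
              rw [hZd t ht i hiZ hti2]
              rw [hddsymm i i']
              exact_mod_cast hnb
            rw [hrw, v_add_eq_left v h1, hvd hii', hddsymm i i']
            exact_mod_cast hnb
    -- products over the cluster
    set Pz : Fin (n+1) → K := fun t => ∏ u ∈ Z.erase t, (x t - x u) with hPzdef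
    set Psi : Fin (n+1) → K := fun t => ((k t : ℕ) : K) * Pz t with hPsidef
    set CC : Fin (n+1) → K := fun t => (x t - c) * ∏ i' ∈ Finset.univ \ Z, (x t - x i') with hCCdef
    have hPzne : ∀ t ∈ Z, Pz t ≠ 0 := by
      intro t ht
      rw [hPzdef]
      refine Finset.prod_ne_zero_iff.mpr fun u hu => ?_
      exact sub_ne_zero.mpr fun h => (Finset.mem_erase.mp hu).1 (hx h).symm
    have hxcne : ∀ t ∈ Z, x t - c ≠ 0 := by
      intro t ht h
      have := hvxc t (hZs t ht)
      rw [h, v.map_zero] at this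
      simp at this
    have hCCne : ∀ t ∈ Z, CC t ≠ 0 := by
      intro t ht
      rw [hCCdef]
      refine mul_ne_zero (hxcne t ht) (Finset.prod_ne_zero_iff.mpr fun i' hi' => ?_)
      exact sub_ne_zero.mpr (hsmall t ht i' hi').1
    -- the split key identity
    have hCE : ∀ t ∈ Z, Psi t * CC t = (p:K) * Y t := by
      intro t ht
      have hsplit : Finset.univ.erase t = (Z.erase t) ∪ (Finset.univ \ Z) := by
        ext u
        simp only [Finset.mem_erase, Finset.mem_union, Finset.mem_sdiff, Finset.mem_univ,
          true_and, and_true]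
        constructor
        · intro hu
          by_cases huZ : u ∈ Z
          · exact Or.inl ⟨hu, huZ⟩
          · exact Or.inr huZ
        · rintro (⟨hu, _⟩ | hu)
          · exact hu
          · intro h; exact hu (h ▸ ht)
      have hdisj : Disjoint (Z.erase t) (Finset.univ \ Z) := by
        refine Finset.disjoint_left.mpr ?_
        intro u hu1 hu2
        exact (Finset.mem_sdiff.mp hu2).2 (Finset.mem_of_mem_erase hu1)
      have hk2 := hkey t (hZs t ht)
      rw [hsplit, Finset.prod_union hdisj] at hk2
      rw [hPsidef, hCCdef, hPzdef]
      linear_combination hk2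
    -- the Rel between the Psi's
    have hRelPsi : ∀ t ∈ Z, ∀ u ∈ Z, t ≠ u → Rel v (Psi t) (Psi u) := by
      intro t ht u hu htu
      have hts := hZs t ht; have hus := hZs u hu
      have hvxtu : v (x t - x u) = ((b : ℝ) : WithTop ℝ) := by
        rw [hvd htu, hZd t ht u hu htu]
      have hRY : Rel v (Y t) (Y u) := hYrel t u htu hts hus
      have hRC : Rel v (CC u) (CC t) := by
        rw [hCCdef]
        refine Rel.mul v ?_ (Rel.prod v _ _ _ fun i' hi' => ?_)
        · show v (x t - c) < v ((x u - c) - (x t - c))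
          rw [show (x u - c) - (x t - c) = -(x t - x u) by ring, v.map_neg, hvxtu,
            hvxc t hts]
          exact_mod_cast hbpos
        · show v (x t - x i') < v ((x u - x i') - (x t - x i'))
          rw [show (x u - x i') - (x t - x i') = -(x t - x u) by ring, v.map_neg, hvxtu]
          exact (hsmall t ht i' hi').2
      have hkey2 : (Psi t - Psi u) * (CC t * CC u) = (p:K) * (Y t * CC u - Y u * CC t) := by
        linear_combination CC u * hCE t ht - CC t * hCE u hu
      have hRYC : Rel v (Y t * CC u) (Y u * CC t) := Rel.mul v hRY hRC
      have hvCCt : v (CC t) ≠ ⊤ := v_ne_top v (hCCne t ht)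
      have hvCCu : v (CC u) ≠ ⊤ := v_ne_top v (hCCne u hu)
      have hstep1 : (e : WithTop ℝ) + v (Y u * CC t) < v ((p:K) * (Y t * CC u - Y u * CC t)) := by
        rw [v.map_mul ((p:K)) (Y t * CC u - Y u * CC t), hvp]
        exact WithTop.add_lt_add_left WithTop.coe_ne_top hRYC
      have hEu : v (Psi u) + v (CC u) = (e:WithTop ℝ) + v (Y u) := by
        calc v (Psi u) + v (CC u) = v (Psi u * CC u) := (v.map_mul _ _).symm
          _ = v ((p:K) * Y u) := by rw [hCE u hu]
          _ = (e:WithTop ℝ) + v (Y u) := by rw [v.map_mul ((p:K)) (Y u), hvp]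
      show v (Psi u) < v (Psi t - Psi u)
      have hL : v (Psi t - Psi u) + (v (CC t) + v (CC u))
          = v ((p:K) * (Y t * CC u - Y u * CC t)) := by
        rw [← hkey2, v.map_mul (Psi t - Psi u) (CC t * CC u), v.map_mul (CC t) (CC u)]
      have hR : (e:WithTop ℝ) + v (Y u * CC t) = v (Psi u) + (v (CC t) + v (CC u)) := by
        rw [v.map_mul (Y u) (CC t)]
        calc (e:WithTop ℝ) + (v (Y u) + v (CC t))
            = ((e:WithTop ℝ) + v (Y u)) + v (CC t) := by rw [add_assoc]
          _ = (v (Psi u) + v (CC u)) + v (CC t) := by rw [hEu]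
          _ = v (Psi u) + (v (CC t) + v (CC u)) := by
              rw [add_assoc, add_comm (v (CC u)) (v (CC t))]
      have hfin : v (CC t) + v (CC u) ≠ ⊤ := by
        simp [WithTop.add_ne_top, hvCCt, hvCCu]
      have hfinal := hstep1
      rw [← hL, hR] at hfinal
      exact (WithTop.add_lt_add_iff_right hfin).mp hfinal
    -- all Pz have the same valuation
    have hvPz : ∀ t ∈ Z, v (Pz t) = (Z.card - 1) • ((b:ℝ) : WithTop ℝ) := by
      intro t ht
      rw [hPzdef]
      show v (∏ u ∈ Z.erase t, (x t - x u)) = _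
      rw [v_prod]
      rw [Finset.sum_congr rfl (fun u hu => ?_), Finset.sum_const,
        Finset.card_erase_of_mem ht]
      obtain ⟨hut, huZ⟩ := Finset.mem_erase.mp hu
      rw [hvd (Ne.symm hut), hZd t ht u huZ (Ne.symm hut)]
    have hvPsi : ∀ t ∈ Z, v (Psi t) = v (Pz t) := by
      intro t ht
      rw [hPsidef]
      show v (((k t : ℕ) : K) * Pz t) = v (Pz t)
      rw [v.map_mul, v_nat_coprime v hp (hkpos t) (hkbound t (hZs t ht)) hvp he, zero_add]
    -- the Lagrange contradiction
    have hinj : Set.InjOn x ↑Z := fun a _ b _ h => hx h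
    have hLag := lagrange_sum_inv Z x hinj hZcard
    set S : K := ∑ t ∈ Z, ((k t : ℕ) : K) with hSdef
    have hSrw : S = ∑ t ∈ Z, (Psi t - Psi i) * (Pz t)⁻¹ := by
      have h1 : ∀ t ∈ Z, (Psi t - Psi i) * (Pz t)⁻¹ = ((k t : ℕ) : K) - Psi i * (Pz t)⁻¹ := by
        intro t ht
        have hne := hPzne t ht
        rw [hPsidef]
        show (((k t : ℕ) : K) * Pz t - Psi i) * (Pz t)⁻¹ = ((k t : ℕ) : K) - Psi i * (Pz t)⁻¹
        field_simp
      rw [hSdef, Finset.sum_congr rfl h1, Finset.sum_sub_distrib, ← Finset.mul_sum]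
      simp only [hPzdef]
      rw [hLag, mul_zero, sub_zero]
    have hvS : (0 : WithTop ℝ) < v S := by
      rw [hSrw]
      refine v_sum_lt v _ _ (by simp) ?_
      intro t ht
      by_cases hti : t = i
      · rw [hti, sub_self, zero_mul, v.map_zero]
        simp
      · have hne := hPzne t ht
        have h1 : v ((Psi t - Psi i) * (Pz t)⁻¹) + v (Pz t) = v (Psi t - Psi i) := by
          rw [← v.map_mul]
          congr 1
          field_simp
        have h2 : v (Psi i) < v (Psi t - Psi i) := hRelPsi t ht i hiZ hti
        rw [hvPsi i hiZ, hvPz i hiZ, ← hvPz t ht] at h2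
        rw [← h1] at h2
        have h3 : (0:WithTop ℝ) + v (Pz t) < v ((Psi t - Psi i) * (Pz t)⁻¹) + v (Pz t) := by
          rwa [zero_add]
        exact (WithTop.add_lt_add_iff_right (v_ne_top v hne)).mp h3
    have hNN : S = ((∑ t ∈ Z, k t : ℕ) : K) := by rw [hSdef, Nat.cast_sum]
    have hNNpos : 0 < ∑ t ∈ Z, k t :=
      lt_of_lt_of_le (hkpos i) (Finset.single_le_sum (fun t _ => Nat.zero_le _) hiZ)
    have hNNlt : (∑ t ∈ Z, k t) < p := by
      have h5 : ∑ t ∈ Z, k t ≤ ∑ t ∈ A, k t := Finset.sum_le_sum_of_subset hZA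
      omega
    have h6 := v_nat_coprime v hp hNNpos hNNlt hvp he
    rw [← hNN] at h6
    rw [h6] at hvS
    exact lt_irrefl _ hvS
  -- STEP 2 : conclusion
  have hAne : A.Nonempty := Finset.card_pos.mp (by omega)
  obtain ⟨imin, hminA, hminle⟩ := Finset.exists_min_image A α hAne
  have hcard1 : 1 ≤ A.card := by omega
  have heq1 : (A.card : ℝ) * α imin = e := by
    have h1 := hHEART imin hminA
    have h2 : ∀ t ∈ A.erase imin, dd imin t = α imin := by
      intro t ht
      obtain ⟨hti, htA⟩ := Finset.mem_erase.mp ht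
      rw [hNO imin hminA t htA (Ne.symm hti), min_eq_left (hminle t htA)]
    rw [Finset.sum_congr rfl h2, Finset.sum_const, Finset.card_erase_of_mem hminA,
      nsmul_eq_mul] at h1
    have hc1 : ((A.card - 1 : ℕ) : ℝ) = (A.card : ℝ) - 1 := by
      push_cast [Nat.cast_sub hcard1]
      ring
    rw [hc1] at h1
    nlinarith [h1]
  have hcastA : ((A.card : ℕ) : ℝ) = (n : ℝ) - 1 := by
    rw [hcardA]
    push_cast [Nat.cast_sub (by omega : 1 ≤ n)]
    ring
  have hcardposR : (0:ℝ) < (A.card : ℝ) := by exact_mod_cast hcard1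
  have hminval : α imin = e / ((n:ℝ) - 1) := by
    rw [← hcastA]
    field_simp
    linarith [heq1]
  have hαval : ∀ t ∈ A, α t = e / ((n:ℝ) - 1) := by
    have hzero : ∑ t ∈ A, (α t - α imin) = 0 := by
      rw [Finset.sum_sub_distrib, hSPADE, Finset.sum_const, nsmul_eq_mul, heq1, sub_self]
    intro t ht
    have h3 := (Finset.sum_eq_zero_iff_of_nonneg
      (fun u hu => sub_nonneg.mpr (hminle u hu))).mp hzero t ht
    have h4 : α t = α imin := by linarith
    rw [h4, hminval]
  have hdval : ∀ i ∈ A, ∀ j ∈ A, i ≠ j → dd i j = e / ((n:ℝ) - 1) := by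
    intro i hi j hj hij
    rw [hNO i hi j hj hij, hαval i hi, hαval j hj, min_self]
  constructor
  · intro i his hii0
    have hiA : i ∈ A := hAmem.mpr ⟨hii0, his⟩
    rw [hvv (hxne i his hii0)]
    rw [show vv (x i) = α i from rfl, hαval i hiA]
  · intro i j his hjs hij
    by_cases hii0 : i = i0
    · have hji0 : j ≠ i0 := fun h => hij (hii0.trans h.symm)
      have hjA : j ∈ A := hAmem.mpr ⟨hji0, hjs⟩
      have h1 : v (x i - x j) = v (x j) := by
        rw [hii0, hx0, zero_sub, v.map_neg]
      rw [h1, hvv (hxne j hjs hji0)]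
      rw [show vv (x j) = α j from rfl, hαval j hjA]
    · by_cases hjj0 : j = i0
      · have hiA : i ∈ A := hAmem.mpr ⟨hii0, his⟩
        have h1 : v (x i - x j) = v (x i) := by rw [hjj0, hx0, sub_zero]
        rw [h1, hvv (hxne i his hii0)]
        rw [show vv (x i) = α i from rfl, hαval i hiA]
      · have hiA : i ∈ A := hAmem.mpr ⟨hii0, his⟩
        have hjA : j ∈ A := hAmem.mpr ⟨hjj0, hjs⟩
        rw [hvd hij, hdval i hiA j hjA hij]


end Stmt12Aux

open Stmt12Aux

/-- A normalized model (with respect to a valuation `v` over the prime `p`) of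
a `2¹`-map with `p+1` edges, `n+1` white vertices with coordinates `x i` and
degrees `k i`, and `m+1` black vertices with coordinates `y j` and degrees
`l j`; `c` is the pole and `r` the second critical value of the Belyi
function `β = ∏ (z - x i)^{k i} / (r (z - c))`. -/
structure NormalizedModel {K : Type*} [Field K] (v : AddValuation K (WithTop ℝ))
    (p n m : ℕ) where
  x : Fin (n + 1) → K
  k : Fin (n + 1) → ℕ
  y : Fin (m + 1) → K
  l : Fin (m + 1) → ℕ
  c : K
  r : K
  hx_inj : Function.Injective x
  hy_inj : Function.Injective y
  hk_pos : ∀ i, 0 < k i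
  hl_pos : ∀ j, 0 < l j
  hk_sum : ∑ i, k i = p + 1
  hl_sum : ∑ j, l j = p + 1
  hnm : n + m = p - 1
  belyi : (∏ i, (X - C (x i)) ^ k i) - C r * (X - C c)
      = ∏ j, (X - C (y j)) ^ l j
  white0 : ∃ i, x i = 0 ∧ 1 < k i
  black1 : ∃ j, y j = 1 ∧ 1 < l j
  integral_x : ∀ i, 0 ≤ v (x i)
  integral_y : ∀ j, 0 ≤ v (y j)
  integral_c : 0 ≤ v c
  white_I : ∀ i₁ i₂, ¬ (0 < v (x i₁)) → ¬ (0 < v (x i₂)) → i₁ = i₂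
  white_exc : ∀ i, ¬ (0 < v (x i)) → k i = 1
  black_I : ∀ j₁ j₂, ¬ (0 < v (y j₁ - 1)) → ¬ (0 < v (y j₂ - 1)) → j₁ = j₂
  black_exc : ∀ j, ¬ (0 < v (y j - 1)) → l j = 1

/-- first case of Theorem 5.1: if the coordinate `x s` of
exactly one white vertex `v s`, of degree 1, does not lie in `I`, then
`v(xᵢ) = e/(n-1)` for all `i ≠ s` with `xᵢ ≠ 0`, and
`v(xᵢ - xⱼ) = e/(n-1)` for all `i, j ≠ s`, `i ≠ j`. -/

theorem stmt12 {K : Type*} [Field K] (v : AddValuation K (WithTop ℝ))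
    (p n m : ℕ) (hp : p.Prime) (hn : 2 ≤ n)
    (D : NormalizedModel v p n m)
    (e : ℝ) (he : 0 < e) (hvp : v (p : K) = (e : WithTop ℝ))
    (s : Fin (n + 1)) (hs_deg : D.k s = 1) (hs : ¬ (0 < v (D.x s)))
    (honly : ∀ i, i ≠ s → 0 < v (D.x i)) :
    (∀ i, i ≠ s → D.x i ≠ 0 →
        v (D.x i) = ((e / ((n : ℝ) - 1) : ℝ) : WithTop ℝ)) ∧
    ∀ i j, i ≠ s → j ≠ s → i ≠ j →
      v (D.x i - D.x j) = ((e / ((n : ℝ) - 1) : ℝ) : WithTop ℝ) := by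
  classical
  obtain ⟨i0, hx0, hki0'⟩ := D.white0
  have hki0 : 2 ≤ D.k i0 := hki0'
  have hp2 : 2 ≤ p := hp.two_le
  have hpK : (p : K) ≠ 0 := by
    intro h
    rw [h, v.map_zero] at hvp
    exact WithTop.coe_ne_top hvp.symm
  have hvxs : v (D.x s) = 0 := le_antisymm (not_lt.mp hs) (D.integral_x s)
  have hi0s : i0 ≠ s := by
    intro h
    rw [h, hs_deg] at hki0
    omega
  have hvy1 : ∀ j, 2 ≤ D.l j → 0 < v (D.y j - 1) := by
    intro j hj
    by_contra hcon
    have := D.black_exc j hcon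
    omega
  have hvy0 : ∀ j, 2 ≤ D.l j → v (D.y j) = 0 := by
    intro j hj
    have h2 : D.y j = 1 + (D.y j - 1) := by ring
    rw [h2, v_add_eq_left v (by rw [v.map_one]; exact hvy1 j hj), v.map_one]
  have hxy : ∀ i j, 2 ≤ D.k i → 2 ≤ D.l j → D.x i ≠ D.y j := by
    intro i j hki hlj heq
    have his : i ≠ s := by intro h; rw [h, hs_deg] at hki; omega
    have h1 : 0 < v (D.x i) := honly i his
    have h2 : 0 < v (D.y j - 1) := hvy1 j hlj
    have h4 := v_sub_ge_min v (D.x i) (D.y j - 1)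
    have h5 : D.x i - (D.y j - 1) = 1 := by rw [heq]; ring
    rw [h5, v.map_one] at h4
    rcases min_le_iff.mp h4 with h | h
    · exact absurd h (not_le.mpr h1)
    · exact absurd h (not_le.mpr h2)
  have hkeyAll := key_identity D.x D.k D.y D.l D.c D.r D.hx_inj D.hy_inj
    D.hk_pos D.hl_pos D.hk_sum D.hl_sum D.hnm hp2 hpK hxy D.belyi
  -- bounds on the white degrees
  have hi0us : i0 ∈ Finset.univ.erase s := Finset.mem_erase.mpr ⟨hi0s, Finset.mem_univ _⟩
  have hsum1 : D.k i0 + ∑ t ∈ (Finset.univ.erase s).erase i0, D.k t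
      = ∑ t ∈ Finset.univ.erase s, D.k t := Finset.add_sum_erase _ _ hi0us
  have hsum2 : D.k s + ∑ t ∈ Finset.univ.erase s, D.k t = p + 1 := by
    rw [Finset.add_sum_erase _ _ (Finset.mem_univ s)]
    exact D.hk_sum
  have hcardA : ((Finset.univ.erase s).erase i0).card = n - 1 := by
    rw [Finset.card_erase_of_mem hi0us, Finset.card_erase_of_mem (Finset.mem_univ s),
      Finset.card_univ, Fintype.card_fin]
    omega
  have hAne : ((Finset.univ.erase s).erase i0).Nonempty := Finset.card_pos.mp (by omega)
  obtain ⟨i1, hi1A⟩ := hAne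
  have hS1 : 1 ≤ ∑ t ∈ (Finset.univ.erase s).erase i0, D.k t :=
    le_trans (D.hk_pos i1) (Finset.single_le_sum (fun t _ => Nat.zero_le _) hi1A)
  have hkAbound : (∑ t ∈ (Finset.univ.erase s).erase i0, D.k t) + 2 ≤ p := by
    have h1 := hs_deg
    omega
  have hkbound : ∀ i, i ≠ s → D.k i < p := by
    intro i his
    by_cases hii0 : i = i0
    · rw [hii0]
      have h1 := hs_deg
      omega
    · have hiA : i ∈ (Finset.univ.erase s).erase i0 :=
        Finset.mem_erase.mpr ⟨hii0, Finset.mem_erase.mpr ⟨his, Finset.mem_univ _⟩⟩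
      have h2 := Finset.single_le_sum (f := D.k) (fun t _ => Nat.zero_le _) hiA
      omega
  -- valuations of the black factors
  have hvYfun : ∀ i, i ≠ s → v (∏ j, (D.x i - D.y j) ^ (D.l j - 1)) = 0 := by
    intro i his
    rw [v_prod]
    refine Finset.sum_eq_zero fun j _ => ?_
    rcases Nat.lt_or_ge (D.l j) 2 with h | h
    · have h0 : D.l j - 1 = 0 := by have := D.hl_pos j; omega
      rw [h0, pow_zero, v.map_one]
    · rw [v.map_pow]
      have h2 : v (D.x i - D.y j) = 0 := by
        rw [v_sub_eq_right v (by rw [hvy0 j h]; exact honly i his)]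
        exact hvy0 j h
      rw [h2, smul_zero]
  have hYrel : ∀ t u, t ≠ u → t ≠ s → u ≠ s →
      Rel v (∏ j, (D.x t - D.y j) ^ (D.l j - 1)) (∏ j, (D.x u - D.y j) ^ (D.l j - 1)) := by
    intro t u htu hts hus
    refine Rel.prod v _ _ _ fun j _ => ?_
    rcases Nat.lt_or_ge (D.l j) 2 with h | h
    · have h0 : D.l j - 1 = 0 := by have := D.hl_pos j; omega
      rw [h0, pow_zero, pow_zero]
      exact Rel.refl v one_ne_zero
    · refine Rel.pow v ?_ _
      show v (D.x u - D.y j) < v ((D.x t - D.y j) - (D.x u - D.y j))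
      have h2 : v (D.x u - D.y j) = 0 := by
        rw [v_sub_eq_right v (by rw [hvy0 j h]; exact honly u hus)]
        exact hvy0 j h
      rw [show (D.x t - D.y j) - (D.x u - D.y j) = D.x t - D.x u by ring, h2]
      calc (0:WithTop ℝ) < min (v (D.x t)) (v (D.x u)) := lt_min (honly t hts) (honly u hus)
        _ ≤ v (D.x t - D.x u) := v_sub_ge_min v _ _
  -- the pole is a unit
  have hNs_ne : (∏ i' ∈ Finset.univ.erase s, (D.x s - D.x i')) ≠ 0 :=
    Finset.prod_ne_zero_iff.mpr fun i' hi' =>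
      sub_ne_zero.mpr fun h => (Finset.mem_erase.mp hi').1 (D.hx_inj h).symm
  have hNs_v : v (∏ i' ∈ Finset.univ.erase s, (D.x s - D.x i')) = 0 := by
    rw [v_prod]
    refine Finset.sum_eq_zero fun i' hi' => ?_
    rw [v_sub_eq_left v (by rw [hvxs]; exact honly i' (Finset.mem_erase.mp hi').1)]
    exact hvxs
  have hvc : v D.c = 0 := by
    have hEs := hkeyAll s
    rw [hs_deg, Nat.cast_one, one_mul] at hEs
    by_cases hYs : (∏ j, (D.x s - D.y j) ^ (D.l j - 1)) = 0
    · rw [hYs, mul_zero] at hEs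
      rcases mul_eq_zero.mp hEs with h | h
      · rw [← sub_eq_zero.mp h]
        exact hvxs
      · exact absurd h hNs_ne
    · have hYsv : (0 : WithTop ℝ) ≤ v (∏ j, (D.x s - D.y j) ^ (D.l j - 1)) := by
        rw [v_prod]
        refine Finset.sum_nonneg fun j _ => ?_
        rw [v.map_pow]
        refine nsmul_nonneg ?_ _
        refine le_trans ?_ (v_sub_ge_min v _ _)
        exact le_min (D.integral_x s) (D.integral_y j)
      have h2 := congrArg v hEs
      rw [v.map_mul (D.x s - D.c) _, v.map_mul ((p:K)) _, hvp, hNs_v, add_zero] at h2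
      have h3 : (0:WithTop ℝ) < v (D.x s - D.c) := by
        rw [h2]
        calc (0:WithTop ℝ) < (e:WithTop ℝ) := by exact_mod_cast he
          _ = (e:WithTop ℝ) + 0 := by rw [add_zero]
          _ ≤ (e:WithTop ℝ) + v (∏ j, (D.x s - D.y j) ^ (D.l j - 1)) := add_le_add_right hYsv _
      have h4 : v (D.x s) < v (D.x s - D.c) := by rw [hvxs]; exact h3
      have h5 : D.c = D.x s - (D.x s - D.c) := by ring
      rw [h5, v_sub_eq_left v h4, hvxs]
  -- apply the valuation core
  have hmain := main_val v hp hn he hvp D.x D.k D.hx_inj D.hk_pos s i0 hi0s hx0 hvxs honly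
    hkbound hkAbound D.c hvc (fun i => ∏ j, (D.x i - D.y j) ^ (D.l j - 1))
    hvYfun hYrel (fun i _ => hkeyAll i)
  obtain ⟨h1, h2⟩ := hmain
  constructor
  · intro i his hxine
    have hii0 : i ≠ i0 := fun h => hxine (by rw [h, hx0])
    exact h1 i his hii0
  · exact h2
end

section
/- Let β be a normalized model of a 2^1-map D with p+1 edges, X the sum of coordinates of white vertices of degree > 1, Y the sum of coordinates of black vertices of degree > 1, k the number of white vertices of degree > 1 and l the number of black vertices of degree > 1. Then X ∈ I and Y ∉ I; consequently Xl − Yk ∉ I, in particular Xl − Yk ≠ 0, and the affine change z' = az + b with a = −k/(Xl − Yk), b = X/(Xl − Yk) is the unique affine transformation sending (X, Y) to (0, 1) in the sense that the new sums are aX + bk = 0 and aY + bl = 1; moreover a is ρ-integral with a ∉ I. -/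
open Polynomial

section Aux
variable {K : Type*} [Field K] (v : AddValuation K (WithTop ℝ))

lemma vnat_nonneg_s14 (n : ℕ) : 0 ≤ v (n : K) := by
  induction n with
  | zero => simp [AddValuation.map_zero]
  | succ n ih =>
    push_cast
    calc (0 : WithTop ℝ) ≤ min (v (n:K)) (v 1) := by
          rw [AddValuation.map_one]; exact le_min ih le_rfl
      _ ≤ v ((n:K) + 1) := v.map_add _ _

lemma vint_nonneg_s14 (a : ℤ) : 0 ≤ v (a : K) := by
  obtain ⟨n, rfl | rfl⟩ := Int.eq_nat_or_neg a
  · exact_mod_cast vnat_nonneg_s14 v n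
  · push_cast
    rw [AddValuation.map_neg]
    exact_mod_cast vnat_nonneg_s14 v n

lemma vnat_zero (p : ℕ) (hp : p.Prime) (e : ℝ) (he : 0 < e)
    (hvp : v (p : K) = (e : WithTop ℝ)) (nn : ℕ) (h0 : 0 < nn) (hlt : nn < p) :
    v (nn : K) = 0 := by
  have hnd : ¬ (p ∣ nn) := Nat.not_dvd_of_pos_of_lt h0 hlt
  have hcop : Nat.gcd nn p = 1 :=
    Nat.coprime_comm.mp (hp.coprime_iff_not_dvd.mpr hnd)
  have hbez := Nat.gcd_eq_gcd_ab nn p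
  rw [hcop] at hbez
  have h1 : (1 : K) = (nn : K) * ((Nat.gcdA nn p : ℤ) : K)
      + (p : K) * ((Nat.gcdB nn p : ℤ) : K) := by
    have := congrArg (fun z : ℤ => (z : K)) hbez
    push_cast at this ⊢
    exact this
  have hpB : 0 < v ((p : K) * ((Nat.gcdB nn p : ℤ) : K)) := by
    rw [AddValuation.map_mul, hvp]
    calc (0 : WithTop ℝ) < (e : WithTop ℝ) := by exact_mod_cast he
      _ ≤ (e : WithTop ℝ) + v (((Nat.gcdB nn p : ℤ) : K)) :=
        le_add_of_nonneg_right (vint_nonneg_s14 v _)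
  have hmin : min (v ((nn : K) * ((Nat.gcdA nn p : ℤ) : K)))
      (v ((p : K) * ((Nat.gcdB nn p : ℤ) : K))) ≤ 0 := by
    have := v.map_add ((nn : K) * ((Nat.gcdA nn p : ℤ) : K))
      ((p : K) * ((Nat.gcdB nn p : ℤ) : K))
    rw [← h1, AddValuation.map_one] at this
    exact this
  have hA : v ((nn : K) * ((Nat.gcdA nn p : ℤ) : K)) ≤ 0 := by
    rcases min_le_iff.mp hmin with h | h
    · exact h
    · exact absurd (lt_of_lt_of_le hpB h) (lt_irrefl 0)
  have hle : v (nn : K) ≤ 0 := by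
    refine le_trans ?_ hA
    rw [AddValuation.map_mul]
    exact le_add_of_nonneg_right (vint_nonneg_s14 v _)
  exact le_antisymm hle (vnat_nonneg_s14 v nn)

end Aux

/-- for a normalized model, with `X` the sum of coordinates of
white vertices of degree `> 1`, `Y` that of black vertices of degree `> 1`,
`kc`, `lc` their numbers: `X ∈ I`, `Y ∉ I`, hence `X·lc − Y·kc ∉ I` (in
particular `≠ 0`), and `a = −kc/(X·lc − Y·kc)`, `b = X/(X·lc − Y·kc)` give the
unique affine change with `aX + b·kc = 0`, `aY + b·lc = 1`; moreover `a` is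
`ρ`-integral and `a ∉ I`. -/
theorem stmt14 {K : Type*} [Field K] (v : AddValuation K (WithTop ℝ))
    (p n m : ℕ) (hp : p.Prime)
    (D : NormalizedModel v p n m)
    (e : ℝ) (he : 0 < e) (hvp : v (p : K) = (e : WithTop ℝ))
    (X Y : K) (kc lc : ℕ)
    (hX : X = ∑ i ∈ Finset.univ.filter (fun i => 1 < D.k i), D.x i)
    (hY : Y = ∑ j ∈ Finset.univ.filter (fun j => 1 < D.l j), D.y j)
    (hkc : kc = (Finset.univ.filter (fun i => 1 < D.k i)).card)
    (hlc : lc = (Finset.univ.filter (fun j => 1 < D.l j)).card) :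
    0 < v X ∧ ¬ (0 < v Y) ∧
    ¬ (0 < v (X * (lc : K) - Y * (kc : K))) ∧
    X * (lc : K) - Y * (kc : K) ≠ 0 ∧
    (let d : K := X * (lc : K) - Y * (kc : K)
     let a : K := -(kc : K) / d
     let b : K := X / d
     a * X + b * (kc : K) = 0 ∧ a * Y + b * (lc : K) = 1 ∧
     (∀ a' b' : K, a' * X + b' * (kc : K) = 0 → a' * Y + b' * (lc : K) = 1 →
        a' = a ∧ b' = b) ∧
     0 ≤ v a ∧ ¬ (0 < v a)) :=  by
  classical
  have hp2 := hp.two_le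
  -- X ∈ I
  have hvX : 0 < v X := by
    rw [hX]
    refine v.map_lt_sum (by simp) ?_
    intro i hi
    rw [Finset.mem_filter] at hi
    by_contra h
    have := D.white_exc i h
    omega
  -- bounds on kc
  have hkub : ∀ i : Fin (n+1), 1 + (if 1 < D.k i then 1 else 0) ≤ D.k i := by
    intro i; have := D.hk_pos i; split <;> omega
  have hksum : (n + 1) + kc ≤ p + 1 := by
    have h1 : ∑ i : Fin (n+1), (1 + if 1 < D.k i then 1 else 0) = (n+1) + kc := by
      rw [Finset.sum_add_distrib, hkc, Finset.card_filter]
      simp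
    calc (n + 1) + kc = _ := h1.symm
      _ ≤ ∑ i, D.k i := Finset.sum_le_sum (fun i _ => hkub i)
      _ = p + 1 := D.hk_sum
  have hkcard : kc ≤ n + 1 := by
    rw [hkc]
    exact le_trans (Finset.card_filter_le _ _) (by simp)
  have hkpos : 0 < kc := by
    obtain ⟨i, _, hi⟩ := D.white0
    rw [hkc]
    exact Finset.card_pos.mpr ⟨i, by simp [hi]⟩
  have hklt : kc < p := by omega
  -- bounds on lc
  have hlub : ∀ j : Fin (m+1), 1 + (if 1 < D.l j then 1 else 0) ≤ D.l j := by
    intro j; have := D.hl_pos j; split <;> omega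
  have hlsum : (m + 1) + lc ≤ p + 1 := by
    have h1 : ∑ j : Fin (m+1), (1 + if 1 < D.l j then 1 else 0) = (m+1) + lc := by
      rw [Finset.sum_add_distrib, hlc, Finset.card_filter]
      simp
    calc (m + 1) + lc = _ := h1.symm
      _ ≤ ∑ j, D.l j := Finset.sum_le_sum (fun j _ => hlub j)
      _ = p + 1 := D.hl_sum
  have hlcard : lc ≤ m + 1 := by
    rw [hlc]
    exact le_trans (Finset.card_filter_le _ _) (by simp)
  have hlpos : 0 < lc := by
    obtain ⟨j, _, hj⟩ := D.black1
    rw [hlc]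
    exact Finset.card_pos.mpr ⟨j, by simp [hj]⟩
  have hllt : lc < p := by omega
  have hvkc : v (kc : K) = 0 := vnat_zero v p hp e he hvp kc hkpos hklt
  have hvlc : v (lc : K) = 0 := vnat_zero v p hp e he hvp lc hlpos hllt
  -- Y ∉ I
  have hsub : Y - (lc : K) = ∑ j ∈ Finset.univ.filter (fun j => 1 < D.l j), (D.y j - 1) := by
    have hone : ∑ _j ∈ Finset.univ.filter (fun j => 1 < D.l j), (1 : K) = (lc : K) := by
      rw [Finset.sum_const, hlc, nsmul_eq_mul, mul_one]
    rw [hY, ← hone, ← Finset.sum_sub_distrib]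
  have hvYl : 0 < v (Y - (lc : K)) := by
    rw [hsub]
    refine v.map_lt_sum (by simp) ?_
    intro j hj
    rw [Finset.mem_filter] at hj
    by_contra h
    have := D.black_exc j h
    omega
  have hvY : v Y = 0 := by
    have hge : 0 ≤ v Y := by
      have hYeq : Y = (Y - (lc : K)) + (lc : K) := by ring
      rw [hYeq]
      refine le_trans ?_ (v.map_add _ _)
      exact le_min hvYl.le (le_of_eq hvlc.symm)
    have hle : v Y ≤ 0 := by
      by_contra h
      push_neg at h
      have hlceq : (lc : K) = Y - (Y - (lc : K)) := by ring
      have h2 : 0 < v (lc : K) := by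
        rw [hlceq]
        exact lt_of_lt_of_le (lt_min h hvYl) (v.map_sub _ _)
      rw [hvlc] at h2
      exact lt_irrefl 0 h2
    exact le_antisymm hle hge
  have hY0 : ¬ (0 < v Y) := by rw [hvY]; exact lt_irrefl 0
  -- d
  have hvXl : 0 < v (X * (lc : K)) := by
    rw [AddValuation.map_mul, hvlc, add_zero]; exact hvX
  have hvYk : v (Y * (kc : K)) = 0 := by
    rw [AddValuation.map_mul, hvY, hvkc, add_zero]
  have hvd : v (X * (lc : K) - Y * (kc : K)) = 0 := by
    rw [AddValuation.map_sub_eq_of_lt_right v (by rw [hvYk]; exact hvXl)]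
    exact hvYk
  have hdI : ¬ (0 < v (X * (lc : K) - Y * (kc : K))) := by
    rw [hvd]; exact lt_irrefl 0
  have hd0 : X * (lc : K) - Y * (kc : K) ≠ 0 := by
    intro h
    rw [h, AddValuation.map_zero] at hvd
    exact (WithTop.top_ne_zero) hvd
  refine ⟨hvX, hY0, hdI, hd0, ?_⟩
  show (-(kc : K) / (X * (lc : K) - Y * (kc : K))) * X
      + (X / (X * (lc : K) - Y * (kc : K))) * (kc : K) = 0 ∧
    (-(kc : K) / (X * (lc : K) - Y * (kc : K))) * Y
      + (X / (X * (lc : K) - Y * (kc : K))) * (lc : K) = 1 ∧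
    (∀ a' b' : K, a' * X + b' * (kc : K) = 0 → a' * Y + b' * (lc : K) = 1 →
      a' = -(kc : K) / (X * (lc : K) - Y * (kc : K)) ∧
      b' = X / (X * (lc : K) - Y * (kc : K))) ∧
    0 ≤ v (-(kc : K) / (X * (lc : K) - Y * (kc : K))) ∧
    ¬ (0 < v (-(kc : K) / (X * (lc : K) - Y * (kc : K))))
  have hva : v (-(kc : K) / (X * (lc : K) - Y * (kc : K))) = 0 := by
    have hmul : (-(kc : K) / (X * (lc : K) - Y * (kc : K)))
        * (X * (lc : K) - Y * (kc : K)) = -(kc : K) := by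
      exact div_mul_cancel₀ _ hd0
    have := congrArg v hmul
    rw [AddValuation.map_mul, hvd, add_zero, AddValuation.map_neg, hvkc] at this
    exact this
  refine ⟨by field_simp; ring, by rw [div_mul_eq_mul_div, div_mul_eq_mul_div, ← add_div, div_eq_one_iff_eq hd0]; ring, ?_, le_of_eq hva.symm,
    by rw [hva]; exact lt_irrefl 0⟩
  intro a' b' h1 h2
  constructor
  · rw [eq_div_iff hd0]
    linear_combination (lc : K) * h1 - (kc : K) * h2
  · rw [eq_div_iff hd0]
    linear_combination (-Y) * h1 + X * h2
end

section
/- For every 2^1-map with p+1 edges (p prime) there exists a unique canonical model: a Belyi function β taking value 0 at all white vertices and 1 at all black vertices, such that the sum of the coordinates of white vertices of degree > 1 is 0 and the sum of the coordinates of black vertices of degree > 1 is 1. Moreover, an affine change of coordinate transforms any normalized model into the canonical model and preserves valuations of differences: v_ρ(x̃_i − x̃_j) = v_ρ(x_i − x_j). -/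
open Polynomial

section Aux
variable {K : Type*} [Field K] (v : AddValuation K (WithTop ℝ))

lemma aux_vnat (N : ℕ) : 0 ≤ v (N : K) := by
  induction N with
  | zero => simp
  | succ n ih =>
      push_cast
      exact v.map_le_add ih (by simp)

lemma aux_vint (z : ℤ) : 0 ≤ v (z : K) := by
  obtain ⟨n, rfl | rfl⟩ := z.eq_nat_or_neg
  · exact_mod_cast aux_vnat v n
  · push_cast
    rw [v.map_neg]
    exact aux_vnat v n

lemma aux_vN0 {p : ℕ} (hp : p.Prime) {e : ℝ} (he : 0 < e)
    (hvp : v (p : K) = (e : WithTop ℝ)) {N : ℕ} (h0 : 0 < N) (hlt : N < p) :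
    v (N : K) = 0 := by
  by_contra h
  have hpos : (0 : WithTop ℝ) < v (N : K) := lt_of_le_of_ne (aux_vnat v N) (Ne.symm h)
  have hnd : ¬ (p ∣ N) := fun hd => absurd (Nat.le_of_dvd h0 hd) (not_le.2 hlt)
  have hcop : Nat.Coprime p N := (Nat.Prime.coprime_iff_not_dvd hp).2 hnd
  have hb := Nat.gcd_eq_gcd_ab p N
  rw [hcop] at hb
  have hK : (1 : K) = (p : K) * ((Nat.gcdA p N : ℤ) : K) + (N : K) * ((Nat.gcdB p N : ℤ) : K) := by
    have := congrArg (fun z : ℤ => (z : K)) hb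
    push_cast at this
    simpa using this
  have h1 : (0 : WithTop ℝ) < v ((p : K) * ((Nat.gcdA p N : ℤ) : K)) := by
    rw [v.map_mul, hvp]
    calc (0 : WithTop ℝ) < (e : WithTop ℝ) := by exact_mod_cast he
      _ ≤ (e : WithTop ℝ) + v ((Nat.gcdA p N : ℤ) : K) :=
          le_add_of_nonneg_right (aux_vint v _)
  have h2 : (0 : WithTop ℝ) < v ((N : K) * ((Nat.gcdB p N : ℤ) : K)) := by
    rw [v.map_mul]
    exact lt_of_lt_of_le hpos (le_add_of_nonneg_right (aux_vint v _))
  have := v.map_lt_add h1 h2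
  rw [← hK, v.map_one] at this
  exact lt_irrefl _ this

lemma aux_card_lt {p n : ℕ} (hp : p.Prime) (k : Fin (n + 1) → ℕ)
    (hk : ∀ i, 0 < k i) (hsum : ∑ i, k i = p + 1) :
    (Finset.univ.filter (fun i => 1 < k i)).card < p := by
  set s := Finset.univ.filter (fun i => 1 < k i) with hs
  have h3 : s.card + (Finset.univ.filter (fun i => ¬ 1 < k i)).card = n + 1 := by
    rw [hs, Finset.card_filter_add_card_filter_not]
    simp
  have hA : s.card * 2 ≤ ∑ i ∈ s, k i :=
    Finset.card_nsmul_le_sum s k 2 (fun i hi => (Finset.mem_filter.1 hi).2)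
  have hB : (Finset.univ.filter (fun i => ¬ 1 < k i)).card * 1 ≤
      ∑ i ∈ Finset.univ.filter (fun i => ¬ 1 < k i), k i :=
    Finset.card_nsmul_le_sum _ k 1 (fun i _ => hk i)
  have hsplit : (∑ i ∈ s, k i) + (∑ i ∈ Finset.univ.filter (fun i => ¬ 1 < k i), k i) = p + 1 := by
    rw [hs, Finset.sum_filter_add_sum_filter_not]
    exact hsum
  have h2 := hp.two_le
  omega

end Aux
/-- for every `2¹`-map with `p+1` edges (given by a normalized
model) there exists a unique canonical model: an affine change of coordinate
`z ↦ a·z + b` after which the sum of the coordinates of white vertices of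
degree `> 1` is `0` and the sum of the coordinates of black vertices of
degree `> 1` is `1` (the Belyi function still takes value `0` at white and
`1` at black vertices); moreover the change preserves valuations of
differences: `v(x̃ᵢ − x̃ⱼ) = v(xᵢ − xⱼ)`. -/
theorem stmt15 {K : Type*} [Field K] (v : AddValuation K (WithTop ℝ))
    (p n m : ℕ) (hp : p.Prime)
    (D : NormalizedModel v p n m)
    (e : ℝ) (he : 0 < e) (hvp : v (p : K) = (e : WithTop ℝ)) :
    ∃ a b : K, a ≠ 0 ∧
      (∑ i ∈ Finset.univ.filter (fun i => 1 < D.k i), (a * D.x i + b)) = 0 ∧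
      (∑ j ∈ Finset.univ.filter (fun j => 1 < D.l j), (a * D.y j + b)) = 1 ∧
      (∀ i j : Fin (n + 1),
        v ((a * D.x i + b) - (a * D.x j + b)) = v (D.x i - D.x j)) ∧
      (∀ i j : Fin (m + 1),
        v ((a * D.y i + b) - (a * D.y j + b)) = v (D.y i - D.y j)) ∧
      ∀ a' b' : K, a' ≠ 0 →
        (∑ i ∈ Finset.univ.filter (fun i => 1 < D.k i), (a' * D.x i + b')) = 0 →
        (∑ j ∈ Finset.univ.filter (fun j => 1 < D.l j), (a' * D.y j + b')) = 1 →
        a' = a ∧ b' = b := by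
  classical
  set sw := Finset.univ.filter (fun i => 1 < D.k i) with hsw
  set sb := Finset.univ.filter (fun j => 1 < D.l j) with hsb
  set S : K := ∑ i ∈ sw, D.x i with hS
  set T : K := ∑ j ∈ sb, D.y j with hT
  set Nw : K := (sw.card : K) with hNw
  set Nb : K := (sb.card : K) with hNb
  have hwlt : sw.card < p := aux_card_lt hp D.k D.hk_pos D.hk_sum
  have hblt : sb.card < p := aux_card_lt hp D.l D.hl_pos D.hl_sum
  have hwpos : 0 < sw.card := by
    obtain ⟨i, _, hik⟩ := D.white0
    exact Finset.card_pos.2 ⟨i, Finset.mem_filter.2 ⟨Finset.mem_univ i, hik⟩⟩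
  have hbpos : 0 < sb.card := by
    obtain ⟨j, _, hjl⟩ := D.black1
    exact Finset.card_pos.2 ⟨j, Finset.mem_filter.2 ⟨Finset.mem_univ j, hjl⟩⟩
  have hvNw : v Nw = 0 := aux_vN0 v hp he hvp hwpos hwlt
  have hvNb : v Nb = 0 := aux_vN0 v hp he hvp hbpos hblt
  have hNw0 : Nw ≠ 0 := by
    intro h; rw [h, v.map_zero] at hvNw; exact (WithTop.top_ne_zero) hvNw
  have hNb0 : Nb ≠ 0 := by
    intro h; rw [h, v.map_zero] at hvNb; exact (WithTop.top_ne_zero) hvNb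
  have hvS : (0 : WithTop ℝ) < v S := by
    apply v.map_lt_sum' (by exact lt_top_iff_ne_top.2 WithTop.zero_ne_top)
    intro i hi
    by_contra h
    have := D.white_exc i h
    have := (Finset.mem_filter.1 hi).2
    omega
  set ε : K := ∑ j ∈ sb, (D.y j - 1) with hε
  have hvε : (0 : WithTop ℝ) < v ε := by
    apply v.map_lt_sum' (by exact lt_top_iff_ne_top.2 WithTop.zero_ne_top)
    intro j hj
    by_contra h
    have := D.black_exc j h
    have := (Finset.mem_filter.1 hj).2
    omega
  have hTeq : T = Nb + ε := by
    rw [hT, hNb, hε, Finset.sum_sub_distrib, Finset.sum_const, nsmul_eq_mul, mul_one]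
    ring
  set det : K := S * Nb - T * Nw with hdet
  have hvdet : v det = 0 := by
    have h1 : v (S - Nw) = 0 := by
      rw [v.map_sub_eq_of_lt_right (by rw [hvNw]; exact hvS), hvNw]
    have h2 : v (Nb * (S - Nw)) = 0 := by rw [v.map_mul, hvNb, h1]; simp
    have h3 : (0 : WithTop ℝ) < v (ε * Nw) := by
      rw [v.map_mul, hvNw, add_zero]; exact hvε
    have hrw : det = Nb * (S - Nw) - ε * Nw := by rw [hdet, hTeq]; ring
    rw [hrw, v.map_sub_eq_of_lt_left (by rw [h2]; exact h3), h2]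
  have hdet0 : det ≠ 0 := by
    intro h; rw [h, v.map_zero] at hvdet; exact (WithTop.top_ne_zero) hvdet
  have hva : v (-Nw / det) = 0 := by
    rw [v.map_div, v.map_neg, hvNw, hvdet, sub_zero]
  refine ⟨-Nw / det, S / det, ?_, ?_, ?_, ?_, ?_, ?_⟩
  · exact div_ne_zero (neg_ne_zero.2 hNw0) hdet0
  · rw [Finset.sum_add_distrib, ← Finset.mul_sum, ← hS, Finset.sum_const, nsmul_eq_mul, ← hNw]
    field_simp
    ring
  · rw [Finset.sum_add_distrib, ← Finset.mul_sum, ← hT, Finset.sum_const, nsmul_eq_mul, ← hNb]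
    field_simp
    linear_combination hdet
  · intro i j
    have : (-Nw / det * D.x i + S / det) - (-Nw / det * D.x j + S / det)
        = (-Nw / det) * (D.x i - D.x j) := by ring
    rw [this, v.map_mul, hva, zero_add]
  · intro i j
    have : (-Nw / det * D.y i + S / det) - (-Nw / det * D.y j + S / det)
        = (-Nw / det) * (D.y i - D.y j) := by ring
    rw [this, v.map_mul, hva, zero_add]
  · intro a' b' _ h1 h2
    rw [Finset.sum_add_distrib, ← Finset.mul_sum, ← hS, Finset.sum_const, nsmul_eq_mul, ← hNw] at h1
    rw [Finset.sum_add_distrib, ← Finset.mul_sum, ← hT, Finset.sum_const, nsmul_eq_mul, ← hNb] at h2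
    -- a' * S + Nw * b' = 0, a' * T + Nb * b' = 1
    have ha' : a' = -Nw / det := by
      have key : a' * det = -Nw := by
        have : a' * det = (a' * S + Nw * b') * Nb - (a' * T + Nb * b') * Nw := by
          rw [hdet]; ring
        rw [h1, h2] at this
        rw [this]; ring
      rw [eq_div_iff hdet0]
      exact key
    refine ⟨ha', ?_⟩
    have hb' : Nw * b' = Nw * (S / det) := by
      have : Nw * b' = -(a' * S) := by linear_combination h1
      rw [this, ha']
      field_simp
    exact mul_left_cancel₀ hNw0 hb'
end
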